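/- arXiv:1804.05715 — 8 statements merged into one kernel-verified Lean document; each statement's English description precedes it below -/
import Mathlib

section
/- Crossing monotonicity: for x ∈ ℤ² and y, z ∈ ℤ² with x + e₁ + e₂ ≤ y, x + e₁ + e₂ ≤ z, |y|₁ = |z|₁, and y·e₁ < z·e₁, one has G(x,y) − G(x+e₁,y) ≥ G(x,z) − G(x+e₁,z). -/
/-- An up-right path of length `n`: each step is `e₁` or `e₂`. -/
def UpRight (p : ℕ → ℤ × ℤ) (n : ℕ) : Prop :=
  ∀ i, i < n → p (i + 1) = p i + (1, 0) ∨ p (i + 1) = p i + (0, 1)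

/-- Last-passage time from `x` to `y`, omitting the weight at the terminal point. -/
noncomputable def G (ω : ℤ × ℤ → ℝ) (x y : ℤ × ℤ) : ℝ :=
  sSup {s : ℝ | ∃ (n : ℕ) (p : ℕ → ℤ × ℤ), p 0 = x ∧ p n = y ∧ UpRight p n ∧
    (n : ℤ) = (y.1 - x.1) + (y.2 - x.2) ∧ s = ∑ i ∈ Finset.range n, ω (p i)}

namespace LPP

/-- The set of path weights from `x` to `y`. -/
def pathSet (ω : ℤ × ℤ → ℝ) (x y : ℤ × ℤ) : Set ℝ :=
  {s : ℝ | ∃ (n : ℕ) (p : ℕ → ℤ × ℤ), p 0 = x ∧ p n = y ∧ UpRight p n ∧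
    (n : ℤ) = (y.1 - x.1) + (y.2 - x.2) ∧ s = ∑ i ∈ Finset.range n, ω (p i)}

lemma G_eq (ω : ℤ × ℤ → ℝ) (x y : ℤ × ℤ) : G ω x y = sSup (pathSet ω x y) := rfl

lemma step_le {p : ℕ → ℤ × ℤ} {n : ℕ} (h : UpRight p n) {i : ℕ} (hi : i < n) :
    p i ≤ p (i + 1) := by
  rcases h i hi with h' | h' <;> rw [h'] <;> exact ⟨by simp, by simp⟩

lemma mono {p : ℕ → ℤ × ℤ} {n : ℕ} (h : UpRight p n) {i j : ℕ} (hij : i ≤ j) (hj : j ≤ n) :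
    p i ≤ p j := by
  induction j with
  | zero => simp_all
  | succ k ih =>
    rcases Nat.lt_or_ge i (k+1) with h' | h'
    · exact le_trans (ih (by omega) (by omega)) (step_le h (by omega))
    · have : i = k + 1 := by omega
      simp [this]

lemma level {p : ℕ → ℤ × ℤ} {n : ℕ} (h : UpRight p n) {i : ℕ} (hi : i ≤ n) :
    (p i).1 + (p i).2 = (p 0).1 + (p 0).2 + i := by
  induction i with
  | zero => simp
  | succ k ih =>
    have hk := ih (by omega)
    rcases h k (by omega) with h' | h' <;> rw [h'] <;>
      simp only [Prod.fst_add, Prod.snd_add] <;> push_cast <;> omega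

lemma fst_succ {p : ℕ → ℤ × ℤ} {n : ℕ} (h : UpRight p n) {i : ℕ} (hi : i < n) :
    (p (i+1)).1 = (p i).1 ∨ (p (i+1)).1 = (p i).1 + 1 := by
  rcases h i hi with h' | h' <;> rw [h'] <;> simp [Prod.fst_add]

lemma nonempty_pathSet (ω : ℤ × ℤ → ℝ) (x y : ℤ × ℤ) (hxy : x ≤ y) :
    (pathSet ω x y).Nonempty := by
  obtain ⟨hx1, hx2⟩ := hxy
  set a : ℕ := (y.1 - x.1).toNat with ha
  set b : ℕ := (y.2 - x.2).toNat with hb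
  have ha' : (a : ℤ) = y.1 - x.1 := Int.toNat_of_nonneg (by omega)
  have hb' : (b : ℤ) = y.2 - x.2 := Int.toNat_of_nonneg (by omega)
  refine ⟨_, a + b, fun i => if i ≤ a then (x.1 + i, x.2) else (y.1, x.2 + (i - a : ℕ)),
    ?_, ?_, ?_, ?_, rfl⟩
  · simp
  · simp only [add_tsub_cancel_left]
    split_ifs with h
    · have : b = 0 := by omega
      have : (y.1 : ℤ) = x.1 + (a + b : ℕ) := by push_cast; omega
      ext <;> simp [this]
      omega
    · ext <;> simp <;> omega
  · intro i hi
    dsimp only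
    rcases Nat.lt_or_ge i a with h' | h'
    · left
      rw [if_pos (by omega), if_pos (by omega)]
      ext <;> simp [Prod.fst_add, Prod.snd_add] ; push_cast ; ring
    · right
      rw [if_neg (by omega)]
      rcases Nat.eq_or_lt_of_le h' with h'' | h''
      · rw [if_pos (by omega)]
        ext <;> simp [Prod.fst_add, Prod.snd_add] <;> push_cast <;> omega
      · rw [if_neg (by omega)]
        ext <;> simp [Prod.fst_add, Prod.snd_add] <;> push_cast <;> omega
  · push_cast; omega

lemma bddAbove_pathSet (ω : ℤ × ℤ → ℝ) (x y : ℤ × ℤ) (hxy : x ≤ y) :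
    BddAbove (pathSet ω x y) := by
  have hne : (Finset.Icc x y).Nonempty := ⟨x, by simp [hxy]⟩
  set M : ℝ := (Finset.Icc x y).sup' hne ω with hM
  set n₀ : ℕ := ((y.1 - x.1) + (y.2 - x.2)).toNat with hn₀
  refine ⟨n₀ • M, ?_⟩
  rintro s ⟨n, p, h0, hn, hup, hlen, rfl⟩
  have hnn : n = n₀ := by omega
  subst hnn
  calc ∑ i ∈ Finset.range n₀, ω (p i) ≤ ∑ i ∈ Finset.range n₀, M := by
        refine Finset.sum_le_sum fun i hi => ?_
        refine Finset.le_sup' ω ?_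
        simp only [Finset.mem_range] at hi
        rw [Finset.mem_Icc]
        constructor
        · rw [← h0]; exact mono hup (Nat.zero_le _) (by omega)
        · rw [← hn]; exact mono hup (by omega) le_rfl
    _ = n₀ • M := by simp [Finset.sum_const]

/-- Discrete IVT: an integer sequence with upward steps ≤ 1 starting ≤ 0
and reaching ≥ 1 hits 0. -/
lemma ivt {f : ℕ → ℤ} {m : ℕ} (h0 : f 0 ≤ 0) (hm : 1 ≤ f m)
    (hstep : ∀ t, t < m → f (t+1) ≤ f t + 1) : ∃ t ≤ m, f t = 0 := by
  have hex : ∃ t, t ≤ m ∧ 1 ≤ f t := ⟨m, le_rfl, hm⟩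
  classical
  obtain ⟨ht₀m, ht₀f⟩ := Nat.find_spec hex
  have ht₀pos : 0 < Nat.find hex := by
    rcases Nat.eq_zero_or_pos (Nat.find hex) with h | h
    · rw [h] at ht₀f; omega
    · exact h
  have hprev : ¬ (Nat.find hex - 1 ≤ m ∧ 1 ≤ f (Nat.find hex - 1)) :=
    Nat.find_min hex (by omega)
  push_neg at hprev
  have hfp : f (Nat.find hex - 1) ≤ 0 := by
    have := hprev (by omega); omega
  have hstep' : f (Nat.find hex) ≤ f (Nat.find hex - 1) + 1 := by
    have := hstep (Nat.find hex - 1) (by omega)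
    rwa [Nat.sub_add_cancel (by omega)] at this
  exact ⟨Nat.find hex - 1, by omega, by omega⟩

/-- Two up-right paths cross: `p` from `x` ends strictly to the right (on the same level)
of the endpoint of `q`, which starts at `x + e₁`. -/
lemma crossing_exists {p q : ℕ → ℤ × ℤ} {n1 n2 : ℕ}
    (hp : UpRight p n1) (hq : UpRight q n2)
    (hq0 : q 0 = p 0 + (1, 0))
    (hn1 : n1 = n2 + 1)
    (hend : (q n2).1 < (p n1).1) :
    ∃ i ≤ n1, ∃ j ≤ n2, p i = q j := by
  set f : ℕ → ℤ := fun t => (p (t+1)).1 - (q t).1 with hf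
  have h0 : f 0 ≤ 0 := by
    rcases fst_succ (i := 0) hp (by omega) with h | h <;>
      simp [hf, h, hq0, Prod.fst_add]
  have hm : 1 ≤ f n2 := by
    simp only [hf, ← hn1]
    omega
  have hstep : ∀ t, t < n2 → f (t+1) ≤ f t + 1 := by
    intro t ht
    have h1 : (p (t+1+1)).1 ≤ (p (t+1)).1 + 1 := by
      rcases fst_succ (i := t+1) hp (by omega) with h | h <;> omega
    have h2 : (q t).1 ≤ (q (t+1)).1 := by
      rcases fst_succ hq ht with h | h <;> omega
    simp only [hf]; omega
  obtain ⟨t, htm, htf⟩ := ivt h0 hm hstep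
  refine ⟨t + 1, by omega, t, htm, ?_⟩
  have hl1 := level hp (show t + 1 ≤ n1 by omega)
  have hl2 := level hq (show t ≤ n2 from htm)
  have hfst : (p (t+1)).1 = (q t).1 := by simp only [hf] at htf; omega
  have hq0' : (q 0).1 + (q 0).2 = (p 0).1 + (p 0).2 + 1 := by
    rw [hq0]; simp [Prod.fst_add, Prod.snd_add]; ring
  have hsnd : (p (t+1)).2 = (q t).2 := by push_cast at hl1 hl2 ⊢; omega
  exact Prod.ext hfst hsnd

/-- Splice: follow `p` up to `i`, then `q` from `j` on. -/
lemma splice (ω : ℤ × ℤ → ℝ) {p q : ℕ → ℤ × ℤ} {n1 n2 i j : ℕ}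
    (hi : i ≤ n1) (hj : j ≤ n2)
    (hp : UpRight p n1) (hq : UpRight q n2) (hcross : p i = q j) :
    ∃ r : ℕ → ℤ × ℤ, r 0 = p 0 ∧ r (i + (n2 - j)) = q n2 ∧ UpRight r (i + (n2 - j)) ∧
      ∑ k ∈ Finset.range (i + (n2 - j)), ω (r k) =
        ∑ k ∈ Finset.range i, ω (p k) + ∑ k ∈ Finset.Ico j n2, ω (q k) := by
  refine ⟨fun k => if k ≤ i then p k else q (j + k - i), ?_, ?_, ?_, ?_⟩
  · simp
  · dsimp only
    rcases Nat.eq_or_lt_of_le hj with h | h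
    · rw [if_pos (by omega)]
      have : i + (n2 - j) = i := by omega
      rw [this, hcross, h]
    · rw [if_neg (by omega)]
      congr 1; omega
  · intro k hk
    dsimp only
    rcases Nat.lt_or_ge k i with h | h
    · rw [if_pos (by omega), if_pos (by omega)]
      exact hp k (by omega)
    · rcases Nat.eq_or_lt_of_le h with h' | h'
      · rw [if_neg (by omega), if_pos (by omega),
            show p k = q j from h' ▸ hcross,
            show j + (k + 1) - i = j + 1 by omega]
        exact hq j (by omega)
      · rw [if_neg (by omega), if_neg (by omega)]
        have e1 : j + (k + 1) - i = (j + k - i) + 1 := by omega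
        rw [e1]
        exact hq (j + k - i) (by omega)
  · rw [Finset.range_eq_Ico, ← Finset.sum_Ico_consecutive _ (Nat.zero_le i) (Nat.le_add_right i _)]
    congr 1
    · refine Finset.sum_congr (by ext; simp) fun k hk => ?_
      simp only [Finset.mem_Ico, Finset.mem_range] at hk
      dsimp only
      rw [if_pos (by omega)]
    · refine Finset.sum_nbij' (fun k => j + k - i) (fun k => i + k - j) ?_ ?_ ?_ ?_ ?_
      · intro k hk; simp only [Finset.mem_Ico] at *; omega
      · intro k hk; simp only [Finset.mem_Ico] at *; omega
      · intro k hk; simp only [Finset.mem_Ico] at hk; omega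
      · intro k hk; simp only [Finset.mem_Ico] at hk; omega
      · intro k hk
        simp only [Finset.mem_Ico] at hk
        dsimp only
        rcases Nat.eq_or_lt_of_le hk.1 with h | h
        · rw [if_pos (by omega), ← h,
            show j + i - i = j by omega, hcross]
        · rw [if_neg (by omega)]

/-- The key exchange: a path from `x` to `z` and a path from `x+e₁` to `y`
can be rearranged into a path from `x` to `y` and a path from `x+e₁` to `z`. -/
lemma exchange (ω : ℤ × ℤ → ℝ) (x y z : ℤ × ℤ)
    (hsum : y.1 + y.2 = z.1 + z.2) (hlt : y.1 < z.1)
    {s1 s2 : ℝ} (hs1 : s1 ∈ pathSet ω x z) (hs2 : s2 ∈ pathSet ω (x + (1, 0)) y) :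
    ∃ s1' ∈ pathSet ω x y, ∃ s2' ∈ pathSet ω (x + (1, 0)) z, s1 + s2 = s1' + s2' := by
  obtain ⟨n1, p, hp0, hpn, hp, hn1len, rfl⟩ := hs1
  obtain ⟨n2, q, hq0, hqn, hq, hn2len, rfl⟩ := hs2
  simp only [Prod.fst_add, Prod.snd_add] at hn2len
  have hn1 : n1 = n2 + 1 := by omega
  have hq0' : q 0 = p 0 + (1, 0) := by rw [hq0, hp0]
  obtain ⟨i, hi, j, hj, hcross⟩ := crossing_exists hp hq hq0' hn1 (by rw [hpn, hqn]; exact hlt)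
  -- level relation between i and j
  have hli := level hp hi
  have hlj := level hq hj
  have hij : i = j + 1 := by
    have h1 : (p i).1 = (q j).1 := by rw [hcross]
    have h2 : (p i).2 = (q j).2 := by rw [hcross]
    have h3 : (q 0).1 + (q 0).2 = (p 0).1 + (p 0).2 + 1 := by
      rw [hq0']; simp [Prod.fst_add, Prod.snd_add]; ring
    omega
  obtain ⟨r, hr0, hrn, hr, hrsum⟩ := splice ω hi hj hp hq hcross
  obtain ⟨r', hr'0, hr'n, hr', hr'sum⟩ := splice ω hj hi hq hp hcross.symm
  refine ⟨_, ⟨i + (n2 - j), r, by rw [hr0, hp0], by rw [hrn, hqn], hr, by push_cast; omega, rfl⟩,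
    _, ⟨j + (n1 - i), r', by rw [hr'0, hq0], by rw [hr'n, hpn], hr',
      by simp only [Prod.fst_add, Prod.snd_add]; push_cast; omega, rfl⟩, ?_⟩
  rw [hrsum, hr'sum]
  have hsp : ∑ k ∈ Finset.range n1, ω (p k) =
      ∑ k ∈ Finset.range i, ω (p k) + ∑ k ∈ Finset.Ico i n1, ω (p k) := by
    exact (Finset.sum_range_add_sum_Ico _ hi).symm
  have hsq : ∑ k ∈ Finset.range n2, ω (q k) =
      ∑ k ∈ Finset.range j, ω (q k) + ∑ k ∈ Finset.Ico j n2, ω (q k) := by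
    exact (Finset.sum_range_add_sum_Ico _ hj).symm
  rw [hsp, hsq]; ring

end LPP

/-- Crossing monotonicity of last-passage gradients. -/
theorem crossing_monotonicity (ω : ℤ × ℤ → ℝ) (x y z : ℤ × ℤ)
    (hy : x + (1, 1) ≤ y) (hz : x + (1, 1) ≤ z)
    (hsum : y.1 + y.2 = z.1 + z.2) (hlt : y.1 < z.1) :
    G ω x y - G ω (x + (1, 0)) y ≥ G ω x z - G ω (x + (1, 0)) z := by
  open LPP in
  obtain ⟨hy1, hy2⟩ : (x + (1,1)).1 ≤ y.1 ∧ (x + (1,1)).2 ≤ y.2 := hy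
  obtain ⟨hz1, hz2⟩ : (x + (1,1)).1 ≤ z.1 ∧ (x + (1,1)).2 ≤ z.2 := hz
  simp only [Prod.fst_add, Prod.snd_add] at hy1 hy2 hz1 hz2
  norm_num at hy1 hy2 hz1 hz2
  have hxy : x ≤ y := ⟨by omega, by omega⟩
  have hxz : x ≤ z := ⟨by omega, by omega⟩
  have hx1y : x + (1, 0) ≤ y := ⟨by simp only [Prod.fst_add]; norm_num; omega,
    by simp only [Prod.snd_add]; norm_num; omega⟩
  have hx1z : x + (1, 0) ≤ z := ⟨by simp only [Prod.fst_add]; norm_num; omega,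
    by simp only [Prod.snd_add]; norm_num; omega⟩
  have ne_xz := LPP.nonempty_pathSet ω x z hxz
  have ne_x1y := LPP.nonempty_pathSet ω (x + (1,0)) y hx1y
  have bd_xy := LPP.bddAbove_pathSet ω x y hxy
  have bd_x1z := LPP.bddAbove_pathSet ω (x + (1,0)) z hx1z
  have key : ∀ s1 ∈ LPP.pathSet ω x z, ∀ s2 ∈ LPP.pathSet ω (x + (1,0)) y,
      s1 + s2 ≤ G ω x y + G ω (x + (1,0)) z := by
    intro s1 hs1 s2 hs2
    obtain ⟨s1', hs1', s2', hs2', heq⟩ := LPP.exchange ω x y z hsum hlt hs1 hs2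
    have h1 : s1' ≤ G ω x y := by rw [LPP.G_eq]; exact le_csSup bd_xy hs1'
    have h2 : s2' ≤ G ω (x + (1,0)) z := by rw [LPP.G_eq]; exact le_csSup bd_x1z hs2'
    linarith
  have main : G ω x z + G ω (x + (1,0)) y ≤ G ω x y + G ω (x + (1,0)) z := by
    rw [LPP.G_eq ω x z]
    have h1 : sSup (LPP.pathSet ω x z) ≤
        (G ω x y + G ω (x + (1,0)) z) - G ω (x + (1,0)) y := by
      refine csSup_le ne_xz fun s1 hs1 => ?_
      have h2 : G ω (x + (1,0)) y ≤ (G ω x y + G ω (x + (1,0)) z) - s1 := by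
        rw [LPP.G_eq]
        refine csSup_le ne_x1y fun s2 hs2 => ?_
        have := key s1 hs1 s2 hs2
        linarith
      linarith
    linarith
  linarith
end

section
/- If B : ℤ² × ℤ² → ℝ satisfies the cocycle property B(x,y) + B(y,z) = B(x,z) for all x,y,z, and the recovery property ω(x) = min(B(x,x+e₁), B(x,x+e₂)) for all x, then any infinite up-right path x₀,x₁,… with ω(x_i) = B(x_i, x_{i+1}) for all i ≥ 0 is an infinite geodesic: for every n, ∑_{i=0}^{n−1} ω(x_i) = G(x₀, x_n). -/
lemma B_self (B : ℤ × ℤ → ℤ × ℤ → ℝ)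
    (hcoc : ∀ x y z : ℤ × ℤ, B x y + B y z = B x z) (x : ℤ × ℤ) : B x x = 0 := by
  have := hcoc x x x; linarith

lemma B_tele (B : ℤ × ℤ → ℤ × ℤ → ℝ)
    (hcoc : ∀ x y z : ℤ × ℤ, B x y + B y z = B x z) (q : ℕ → ℤ × ℤ) :
    ∀ m : ℕ, ∑ i ∈ Finset.range m, B (q i) (q (i + 1)) = B (q 0) (q m) := by
  intro m
  induction m with
  | zero => simp [B_self B hcoc]
  | succ k ih => rw [Finset.sum_range_succ, ih, hcoc]

/-- A path following the minimal gradient of a recovering cocycle is a geodesic. -/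
theorem cocycle_path_is_geodesic (ω : ℤ × ℤ → ℝ) (B : ℤ × ℤ → ℤ × ℤ → ℝ)
    (hcoc : ∀ x y z : ℤ × ℤ, B x y + B y z = B x z)
    (hrec : ∀ x : ℤ × ℤ, ω x = min (B x (x + (1, 0))) (B x (x + (0, 1))))
    (p : ℕ → ℤ × ℤ)
    (hpath : ∀ i : ℕ, p (i + 1) = p i + (1, 0) ∨ p (i + 1) = p i + (0, 1))
    (hmin : ∀ i : ℕ, ω (p i) = B (p i) (p (i + 1))) :
    ∀ n : ℕ, ∑ i ∈ Finset.range n, ω (p i) = G ω (p 0) (p n) := by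
  intro n
  have hstep : ∀ (q : ℕ → ℤ × ℤ) (i : ℕ),
      (q (i + 1) = q i + (1, 0) ∨ q (i + 1) = q i + (0, 1)) →
      ω (q i) ≤ B (q i) (q (i + 1)) := by
    intro q i h
    rw [hrec]
    rcases h with h | h <;> rw [h]
    · exact min_le_left _ _
    · exact min_le_right _ _
  have hsum : ∑ i ∈ Finset.range n, ω (p i) = B (p 0) (p n) := by
    rw [← B_tele B hcoc p n]
    exact Finset.sum_congr rfl fun i _ => hmin i
  have hub : ∀ s ∈ {s : ℝ | ∃ (m : ℕ) (q : ℕ → ℤ × ℤ), q 0 = p 0 ∧ q m = p n ∧ UpRight q m ∧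
      (m : ℤ) = ((p n).1 - (p 0).1) + ((p n).2 - (p 0).2) ∧
      s = ∑ i ∈ Finset.range m, ω (q i)}, s ≤ ∑ i ∈ Finset.range n, ω (p i) := by
    rintro s ⟨m, q, hq0, hqm, hur, _, rfl⟩
    calc ∑ i ∈ Finset.range m, ω (q i)
        ≤ ∑ i ∈ Finset.range m, B (q i) (q (i + 1)) := by
          apply Finset.sum_le_sum
          intro i hi
          exact hstep q i (hur i (Finset.mem_range.mp hi))
      _ = B (q 0) (q m) := B_tele B hcoc q m
      _ = B (p 0) (p n) := by rw [hq0, hqm]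
      _ = ∑ i ∈ Finset.range n, ω (p i) := hsum.symm
  have hdisp : ∀ m : ℕ, (m : ℤ) = ((p m).1 - (p 0).1) + ((p m).2 - (p 0).2) := by
    intro m
    induction m with
    | zero => simp
    | succ k ih =>
      rcases hpath k with h | h <;>
        simp only [h, Prod.fst_add, Prod.snd_add] <;> push_cast <;> linarith
  have hmem : (∑ i ∈ Finset.range n, ω (p i)) ∈ {s : ℝ | ∃ (m : ℕ) (q : ℕ → ℤ × ℤ),
      q 0 = p 0 ∧ q m = p n ∧ UpRight q m ∧
      (m : ℤ) = ((p n).1 - (p 0).1) + ((p n).2 - (p 0).2) ∧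
      s = ∑ i ∈ Finset.range m, ω (q i)} :=
    ⟨n, p, rfl, rfl, fun i _ => hpath i, hdisp n, rfl⟩
  refine le_antisymm (le_csSup ⟨_, hub⟩ hmem) (csSup_le ⟨_, hmem⟩ hub)
end

section
/- Under the hypotheses of the previous statement (B a cocycle satisfying recovery, and x₀,x₁,… following minimal B-gradients), one moreover has G(x_m, x_n) = B(x_m, x_n) for all 0 ≤ m ≤ n. -/
lemma tele (B : ℤ × ℤ → ℤ × ℤ → ℝ)
    (hcoc : ∀ x y z : ℤ × ℤ, B x y + B y z = B x z)
    (q : ℕ → ℤ × ℤ) : ∀ k : ℕ, ∑ i ∈ Finset.range k, B (q i) (q (i+1)) = B (q 0) (q k) := by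
  intro k
  induction k with
  | zero =>
    simp only [Finset.range_zero, Finset.sum_empty]
    have := hcoc (q 0) (q 0) (q 0)
    linarith
  | succ k ih =>
    rw [Finset.sum_range_succ, ih, hcoc]

/-- Along a path following the minimal gradient of a recovering cocycle,
passage times agree with the cocycle. -/
theorem lpp_eq_cocycle_on_path (ω : ℤ × ℤ → ℝ) (B : ℤ × ℤ → ℤ × ℤ → ℝ)
    (hcoc : ∀ x y z : ℤ × ℤ, B x y + B y z = B x z)
    (hrec : ∀ x : ℤ × ℤ, ω x = min (B x (x + (1, 0))) (B x (x + (0, 1))))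
    (p : ℕ → ℤ × ℤ)
    (hpath : ∀ i : ℕ, p (i + 1) = p i + (1, 0) ∨ p (i + 1) = p i + (0, 1))
    (hmin : ∀ i : ℕ, ω (p i) = B (p i) (p (i + 1))) :
    ∀ m n : ℕ, m ≤ n → G ω (p m) (p n) = B (p m) (p n) := by
  intro m n hmn
  set x := p m
  set y := p n
  set S := {s : ℝ | ∃ (k : ℕ) (q : ℕ → ℤ × ℤ), q 0 = x ∧ q k = y ∧ UpRight q k ∧
    (k : ℤ) = (y.1 - x.1) + (y.2 - x.2) ∧ s = ∑ i ∈ Finset.range k, ω (q i)} with hS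
  -- upper bound
  have hub : ∀ s ∈ S, s ≤ B x y := by
    rintro s ⟨k, q, hq0, hqk, hur, _, hsum⟩
    have hle : ∀ i ∈ Finset.range k, ω (q i) ≤ B (q i) (q (i+1)) := by
      intro i hi
      rcases hur i (Finset.mem_range.mp hi) with h | h
      · rw [hrec (q i), h]; exact min_le_left _ _
      · rw [hrec (q i), h]; exact min_le_right _ _
    calc s ≤ ∑ i ∈ Finset.range k, B (q i) (q (i+1)) := by
            rw [hsum]; exact Finset.sum_le_sum hle
      _ = B (q 0) (q k) := tele B hcoc q k
      _ = B x y := by rw [hq0, hqk]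
  -- coordinate sum along p
  have hcoord : ∀ j : ℕ, (p j).1 + (p j).2 = (p 0).1 + (p 0).2 + j := by
    intro j
    induction j with
    | zero => simp
    | succ j ih =>
      rcases hpath j with h | h <;> rw [h] <;> push_cast <;>
        simp [Prod.fst_add, Prod.snd_add] <;> linarith
  -- membership of B x y
  have hmem : B x y ∈ S := by
    refine ⟨n - m, fun i => p (m + i), rfl, by show p (m + (n - m)) = y; rw [Nat.add_sub_cancel' hmn], ?_, ?_, ?_⟩
    · intro i _
      show p (m + (i + 1)) = p (m + i) + (1, 0) ∨ p (m + (i + 1)) = p (m + i) + (0, 1)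
      have h : m + (i + 1) = (m + i) + 1 := by ring
      rw [h]; exact hpath (m + i)
    · have h1 := hcoord m
      have h2 := hcoord n
      have : ((n - m : ℕ) : ℤ) = (n : ℤ) - (m : ℤ) := by
        omega
      rw [this]
      simp only [x, y]
      omega
    · have : ∀ i ∈ Finset.range (n - m), ω (p (m + i)) = B (p (m + i)) (p (m + (i + 1))) := by
        intro i _
        have h : m + (i + 1) = (m + i) + 1 := by ring
        rw [h]; exact hmin (m + i)
      rw [Finset.sum_congr rfl this, tele B hcoc (fun i => p (m + i)) (n - m)]
      simp [Nat.add_sub_cancel' hmn, x, y]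
  have hbdd : BddAbove S := ⟨B x y, hub⟩
  have hne : S.Nonempty := ⟨B x y, hmem⟩
  have : G ω x y = sSup S := rfl
  rw [this]
  exact le_antisymm (csSup_le hne hub) (le_csSup hbdd hmem)
end

section
/- Recovery implies domination: if B is a cocycle on ℤ² with ω(x) = min(B(x,x+e₁), B(x,x+e₂)) for all x, then G(x,y) ≤ B(x,y) for all x ≤ y coordinatewise. -/
private lemma telescope (B : ℤ × ℤ → ℤ × ℤ → ℝ)
    (hcoc : ∀ x y z : ℤ × ℤ, B x y + B y z = B x z) (p : ℕ → ℤ × ℤ) :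
    ∀ n : ℕ, ∑ i ∈ Finset.range n, B (p i) (p (i + 1)) = B (p 0) (p n) := by
  intro n
  induction n with
  | zero =>
    simp
    have := hcoc (p 0) (p 0) (p 0)
    linarith
  | succ n ih =>
    rw [Finset.sum_range_succ, ih, hcoc]

/-- A recovering cocycle dominates the last-passage time. -/
theorem lpp_le_cocycle (ω : ℤ × ℤ → ℝ) (B : ℤ × ℤ → ℤ × ℤ → ℝ)
    (hcoc : ∀ x y z : ℤ × ℤ, B x y + B y z = B x z)
    (hrec : ∀ x : ℤ × ℤ, ω x = min (B x (x + (1, 0))) (B x (x + (0, 1)))) :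
    ∀ x y : ℤ × ℤ, x ≤ y → G ω x y ≤ B x y := by
  intro x y hxy
  obtain ⟨h1, h2⟩ := Prod.le_def.mp hxy
  apply csSup_le
  · -- nonempty: explicit staircase path
    set a : ℕ := (y.1 - x.1).toNat with ha_def
    set b : ℕ := (y.2 - x.2).toNat with hb_def
    have ha : (a : ℤ) = y.1 - x.1 := Int.toNat_of_nonneg (by linarith)
    have hb : (b : ℤ) = y.2 - x.2 := Int.toNat_of_nonneg (by linarith)
    refine ⟨_, ⟨a + b, fun i => (x.1 + min (i : ℤ) a, x.2 + max ((i : ℤ) - a) 0),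
      ?_, ?_, ?_, ?_, rfl⟩⟩
    · simp only [Prod.ext_iff]
      push_cast
      constructor <;> omega
    · simp only [Prod.ext_iff]
      push_cast
      constructor <;> omega
    · intro i hi
      have hi' : (i : ℤ) < (a : ℤ) + b := by exact_mod_cast hi
      by_cases h : (i : ℤ) < a
      · left
        simp only [Prod.ext_iff, Prod.fst_add, Prod.snd_add]
        push_cast
        constructor <;> omega
      · right
        simp only [Prod.ext_iff, Prod.fst_add, Prod.snd_add]
        push_cast
        constructor <;> omega
    · push_cast
      omega
  · rintro s ⟨n, p, hp0, hpn, hUR, hn, rfl⟩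
    calc ∑ i ∈ Finset.range n, ω (p i)
        ≤ ∑ i ∈ Finset.range n, B (p i) (p (i + 1)) := by
          apply Finset.sum_le_sum
          intro i hi
          rw [hrec]
          rcases hUR i (Finset.mem_range.mp hi) with h | h
          · rw [h]; exact min_le_left _ _
          · rw [h]; exact min_le_right _ _
      _ = B x y := by rw [telescope B hcoc p n, hp0, hpn]
end

section
/- Existence of semi-infinite geodesics: for any weight configuration ω : ℤ² → ℝ and any x ∈ ℤ², there exists an infinite up-right path x₀ = x, x₁, x₂, … such that every finite segment x_m,…,x_n is a geodesic, i.e., ∑_{i=m}^{n−1} ω(x_i) = G(x_m, x_n). -/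
def Sset (ω : ℤ × ℤ → ℝ) (x y : ℤ × ℤ) : Set ℝ :=
  {s : ℝ | ∃ (n : ℕ) (p : ℕ → ℤ × ℤ), p 0 = x ∧ p n = y ∧ UpRight p n ∧
    (n : ℤ) = (y.1 - x.1) + (y.2 - x.2) ∧ s = ∑ i ∈ Finset.range n, ω (p i)}

lemma G_eq (ω : ℤ × ℤ → ℝ) (x y : ℤ × ℤ) : G ω x y = sSup (Sset ω x y) := rfl

lemma coord_sum {p : ℕ → ℤ × ℤ} {n : ℕ} (h : UpRight p n) :
    ∀ i, i ≤ n → (p i).1 + (p i).2 = (p 0).1 + (p 0).2 + i := by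
  intro i hi
  induction i with
  | zero => simp
  | succ k ih =>
    have hk : k < n := hi
    have h2 := ih hk.le
    rcases h k hk with hs | hs <;>
      (rw [hs]; simp [Prod.fst_add, Prod.snd_add]; push_cast; linarith)

lemma coord1_bounds {p : ℕ → ℤ × ℤ} {n : ℕ} (h : UpRight p n) :
    ∀ i, i ≤ n → (p 0).1 ≤ (p i).1 ∧ (p i).1 ≤ (p 0).1 + i := by
  intro i hi
  induction i with
  | zero => simp
  | succ k ih =>
    have hk : k < n := hi
    have h2 := ih hk.le
    rcases h k hk with hs | hs <;>
      (rw [hs]; simp [Prod.fst_add]; push_cast; constructor <;> linarith [h2.1, h2.2])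

def pathOf (x : ℤ × ℤ) (σ : ℕ → Bool) (i : ℕ) : ℤ × ℤ :=
  x + ∑ j ∈ Finset.range i, (if σ j then ((1:ℤ), (0:ℤ)) else (0, 1))

lemma pathOf_zero (x : ℤ × ℤ) (σ : ℕ → Bool) : pathOf x σ 0 = x := by simp [pathOf]

lemma pathOf_succ (x : ℤ × ℤ) (σ : ℕ → Bool) (k : ℕ) :
    pathOf x σ (k+1) = pathOf x σ k + (if σ k then ((1:ℤ),(0:ℤ)) else (0,1)) := by
  simp [pathOf, Finset.sum_range_succ, add_assoc]

lemma pathOf_upRight (x : ℤ × ℤ) (σ : ℕ → Bool) (n : ℕ) : UpRight (pathOf x σ) n := by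
  intro i _
  rw [pathOf_succ]
  by_cases h : σ i <;> simp [h]

lemma eq_pathOf {p : ℕ → ℤ × ℤ} {n : ℕ} (h : UpRight p n) (σ : ℕ → Bool)
    (hσ : ∀ j, j < n → σ j = decide (p (j+1) = p j + (1,0))) :
    ∀ i, i ≤ n → p i = pathOf (p 0) σ i := by
  intro i hi
  induction i with
  | zero => simp [pathOf_zero]
  | succ k ih =>
    have hk : k < n := hi
    have hpk := ih hk.le
    rw [pathOf_succ, ← hpk, hσ k hk]
    rcases h k hk with hs | hs
    · simp [hs]
    · have hne : ¬ (p (k+1) = p k + (1,0)) := by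
        rw [hs]
        intro hc
        have := add_left_cancel hc
        simp [Prod.ext_iff] at this
      simp [hne, hs]

lemma Sset_finite (ω : ℤ × ℤ → ℝ) (x y : ℤ × ℤ) : (Sset ω x y).Finite := by
  set n : ℕ := ((y.1 - x.1) + (y.2 - x.2)).toNat with hn
  apply Set.Finite.subset (Set.finite_range (fun τ : Fin n → Bool =>
    ∑ i ∈ Finset.range n, ω (pathOf x (fun j => if h : j < n then τ ⟨j, h⟩ else false) i)))
  rintro s ⟨m, p, h0, hm, hup, hlen, hsum⟩
  have hmn : m = n := by omega
  subst hmn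
  refine ⟨fun j => decide (p (j+1) = p j + (1,0)), ?_⟩
  have := eq_pathOf hup (fun j => if h : j < n then decide (p (j+1) = p j + (1,0)) else false)
    (fun j hj => by simp [hj]) 
  rw [hsum]
  apply Finset.sum_congr rfl
  intro i hi
  rw [Finset.mem_range] at hi
  rw [this i hi.le, h0]

lemma le_G {ω : ℤ × ℤ → ℝ} {x y : ℤ × ℤ} {s : ℝ} (hs : s ∈ Sset ω x y) : s ≤ G ω x y :=
  le_csSup (Sset_finite ω x y).bddAbove hs

lemma G_mem {ω : ℤ × ℤ → ℝ} {x y : ℤ × ℤ} (h : (Sset ω x y).Nonempty) : G ω x y ∈ Sset ω x y :=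
  h.csSup_mem (Sset_finite ω x y)

lemma sumIco_mem (ω : ℤ × ℤ → ℝ) {p : ℕ → ℤ × ℤ} {N m n : ℕ} (h : UpRight p N)
    (hmn : m ≤ n) (hnN : n ≤ N) :
    (∑ i ∈ Finset.Ico m n, ω (p i)) ∈ Sset ω (p m) (p n) := by
  refine ⟨n - m, fun i => p (m + i), by simp,
    show p (m + (n - m)) = p n by rw [Nat.add_sub_cancel' hmn], ?_, ?_, ?_⟩
  · intro i hi
    have := h (m + i) (by omega)
    rcases this with hs | hs
    · left
      show p (m + (i+1)) = p (m + i) + (1,0)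
      rw [show m + (i+1) = (m+i)+1 by omega, hs]
    · right
      show p (m + (i+1)) = p (m + i) + (0,1)
      rw [show m + (i+1) = (m+i)+1 by omega, hs]
  · have h1 := coord_sum h n hnN
    have h2 := coord_sum h m (hmn.trans hnN)
    push_cast [hmn]
    omega
  · rw [Finset.sum_Ico_eq_sum_range]

lemma add_mem {ω : ℤ × ℤ → ℝ} {x y z : ℤ × ℤ} {a b : ℝ}
    (ha : a ∈ Sset ω x y) (hb : b ∈ Sset ω y z) : a + b ∈ Sset ω x z := by
  obtain ⟨n₁, p, hp0, hpn, hpu, hpl, hps⟩ := ha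
  obtain ⟨n₂, q, hq0, hqn, hqu, hql, hqs⟩ := hb
  refine ⟨n₁ + n₂, fun i => if i < n₁ then p i else q (i - n₁), ?_, ?_, ?_, ?_, ?_⟩
  · by_cases h : 0 < n₁
    · simp [h, hp0]
    · have hn0 : n₁ = 0 := by omega
      simp only [h, if_false]
      rw [hn0] at hpn
      simp [hq0, ← hpn, hp0]
  · have : ¬ (n₁ + n₂ < n₁) := by omega
    simp [this, hqn]
  · intro i hi
    by_cases h : i + 1 < n₁
    · have h' : i < n₁ := by omega
      simpa [h, h'] using hpu i h'
    · by_cases h' : i < n₁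
      · have hin : i + 1 = n₁ := by omega
        have := hpu i h'
        simp only [h, h', if_false, if_true]
        rw [show i + 1 - n₁ = 0 by omega, hq0, ← hpn, ← hin]
        exact this
      · have h2 : i - n₁ < n₂ := by omega
        have := hqu (i - n₁) h2
        simp only [h, h', if_false]
        rw [show i + 1 - n₁ = (i - n₁) + 1 by omega]
        exact this
  · push_cast
    rw [hpl, hql]; ring
  · rw [Finset.sum_range_add]
    congr 1
    · rw [hps]
      apply Finset.sum_congr rfl
      intro i hi
      rw [Finset.mem_range] at hi
      simp [hi]
    · rw [hqs]
      apply Finset.sum_congr rfl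
      intro i _
      have : ¬ (n₁ + i < n₁) := by omega
      simp [this]

lemma ultra_finite_val {α : Type*} (U : Ultrafilter ℕ) (f : ℕ → α) {s : Set α} (hs : s.Finite)
    (hf : {N | f N ∈ s} ∈ U) : ∃ v, {N | f N = v} ∈ U := by
  by_contra hcon
  push_neg at hcon
  have h1 : ∀ v, {N | f N = v}ᶜ ∈ U := fun v => Ultrafilter.compl_mem_iff_notMem.2 (hcon v)
  have h2 : (⋂ v ∈ s, {N | f N = v}ᶜ) ∈ U := (Filter.biInter_mem hs).2 fun v _ => h1 v
  obtain ⟨N, hN1, hN2⟩ := Filter.nonempty_of_mem (Filter.inter_mem hf h2)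
  simp only [Set.mem_iInter, Set.mem_compl_iff, Set.mem_setOf_eq] at hN1 hN2
  exact hN2 (f N) hN1 rfl

lemma Sset_diag_nonempty (ω : ℤ × ℤ → ℝ) (x : ℤ × ℤ) (N : ℕ) :
    (Sset ω x (x + ((N:ℤ), (N:ℤ)))).Nonempty := by
  refine ⟨_, 2*N, pathOf x (fun j => decide (j < N)), pathOf_zero x _, ?_, pathOf_upRight x _ _,
    ?_, rfl⟩
  · show x + ∑ j ∈ Finset.range (2*N), _ = x + ((N:ℤ), (N:ℤ))
    congr 1
    rw [two_mul, Finset.sum_range_add]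
    have e1 : ∑ j ∈ Finset.range N, (if decide (j < N) = true then ((1:ℤ),(0:ℤ)) else (0,1))
        = ((N:ℤ), (0:ℤ)) := by
      have h : ∀ j ∈ Finset.range N,
          (if decide (j < N) = true then ((1:ℤ),(0:ℤ)) else (0,1)) = ((1:ℤ),(0:ℤ)) :=
        fun j hj => by simp [Finset.mem_range.mp hj]
      rw [Finset.sum_congr rfl h]
      simp [Prod.ext_iff]
    have e2 : ∑ j ∈ Finset.range N, (if decide (N + j < N) = true then ((1:ℤ),(0:ℤ)) else (0,1))
        = ((0:ℤ), (N:ℤ)) := by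
      have h : ∀ j ∈ Finset.range N,
          (if decide (N + j < N) = true then ((1:ℤ),(0:ℤ)) else (0,1)) = ((0:ℤ),(1:ℤ)) :=
        fun j _ => by simp
      rw [Finset.sum_congr rfl h]
      simp [Prod.ext_iff]
    rw [e1, e2]
    simp [Prod.ext_iff]
  · simp [Prod.fst_add, Prod.snd_add]
    push_cast
    ring

/-- Existence of semi-infinite geodesics out of every point. -/
theorem exists_semi_infinite_geodesic (ω : ℤ × ℤ → ℝ) (x : ℤ × ℤ) :
    ∃ p : ℕ → ℤ × ℤ, p 0 = x ∧
      (∀ i : ℕ, p (i + 1) = p i + (1, 0) ∨ p (i + 1) = p i + (0, 1)) ∧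
      ∀ m n : ℕ, m ≤ n → ∑ i ∈ Finset.Ico m n, ω (p i) = G ω (p m) (p n) := by
  classical
  have hmem : ∀ N : ℕ, G ω x (x + ((N:ℤ),(N:ℤ))) ∈ Sset ω x (x + ((N:ℤ),(N:ℤ))) :=
    fun N => G_mem (Sset_diag_nonempty ω x N)
  choose n γ hγ0 hγend hγup hγlen hγsum using hmem
  have hn2 : ∀ N, n N = 2 * N := by
    intro N
    have := hγlen N
    simp [Prod.fst_add, Prod.snd_add] at this
    omega
  set U : Ultrafilter ℕ := Filter.hyperfilter ℕ with hU
  have hcof : ∀ i : ℕ, {N | i ≤ N} ∈ U := by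
    intro i
    apply Filter.hyperfilter_le_cofinite
    rw [Filter.mem_cofinite]
    exact (Set.finite_lt_nat i).subset (by intro N; simp [not_le])
  have hTv : ∀ i : ℕ, ∃ v, {N | γ N i = v} ∈ U := by
    intro i
    apply ultra_finite_val U (fun N => γ N i)
      (s := (fun a : Fin (i+1) => ((x.1 + (a.1:ℤ)), (x.2 + ((i:ℤ) - (a.1:ℤ))))) '' Set.univ)
      ((Set.finite_univ).image _)
    apply Filter.mem_of_superset (hcof i)
    intro N hN
    simp only [Set.mem_setOf_eq] at hN ⊢
    have hiN : i ≤ n N := by rw [hn2]; omega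
    have hb := coord1_bounds (hγup N) i hiN
    have hs := coord_sum (hγup N) i hiN
    rw [hγ0 N] at hb hs
    refine ⟨⟨((γ N i).1 - x.1).toNat, by omega⟩, Set.mem_univ _, ?_⟩
    simp only
    rw [Prod.ext_iff]
    constructor
    · simp; omega
    · simp; omega
  choose p hp using hTv
  have hagree : ∀ k : ℕ, ∃ N : ℕ, k ≤ N ∧ ∀ i, i ≤ k → γ N i = p i := by
    intro k
    have h1 : (⋂ i ∈ Finset.range (k+1), {N | γ N i = p i}) ∈ U :=
      (Filter.biInter_finset_mem _).2 fun i _ => hp i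
    obtain ⟨N, hN1, hN2⟩ := Filter.nonempty_of_mem (Filter.inter_mem (hcof k) h1)
    refine ⟨N, hN1, fun i hi => ?_⟩
    simp only [Set.mem_iInter, Finset.mem_range, Set.mem_setOf_eq] at hN2
    exact hN2 i (by omega)
  have hp0 : p 0 = x := by
    obtain ⟨N, _, hag⟩ := hagree 0
    rw [← hag 0 le_rfl, hγ0]
  have hstep : ∀ i : ℕ, p (i+1) = p i + (1,0) ∨ p (i+1) = p i + (0,1) := by
    intro i
    obtain ⟨N, hN, hag⟩ := hagree (i+1)
    have h1 : i < n N := by rw [hn2]; omega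
    have := hγup N i h1
    rwa [hag (i+1) le_rfl, hag i (by omega)] at this
  have hpref : ∀ k : ℕ, ∑ i ∈ Finset.range k, ω (p i) = G ω x (p k) := by
    intro k
    obtain ⟨N, hN, hag⟩ := hagree k
    have hk2 : k ≤ n N := by rw [hn2]; omega
    have a1 : (∑ i ∈ Finset.Ico 0 k, ω (γ N i)) ∈ Sset ω (γ N 0) (γ N k) :=
      sumIco_mem ω (hγup N) (Nat.zero_le k) hk2
    rw [hγ0 N] at a1
    have a2 : (∑ i ∈ Finset.Ico k (n N), ω (γ N i))
        ∈ Sset ω (γ N k) (x + ((N:ℤ),(N:ℤ))) := by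
      have := sumIco_mem ω (hγup N) hk2 le_rfl
      rwa [hγend N] at this
    have hub := G_mem ⟨_, a1⟩
    have hle2 := le_G (add_mem hub a2)
    rw [hγsum N] at hle2
    have hsplit : ∑ i ∈ Finset.range (n N), ω (γ N i)
        = ∑ i ∈ Finset.Ico 0 k, ω (γ N i) + ∑ i ∈ Finset.Ico k (n N), ω (γ N i) := by
      rw [Finset.sum_Ico_consecutive _ (Nat.zero_le k) hk2, ← Finset.range_eq_Ico]
    rw [hsplit] at hle2
    have hle1 := le_G a1
    have heq : ∑ i ∈ Finset.Ico 0 k, ω (γ N i) = G ω x (γ N k) :=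
      le_antisymm hle1 (by linarith)
    have hsc : ∑ i ∈ Finset.Ico 0 k, ω (γ N i) = ∑ i ∈ Finset.range k, ω (p i) := by
      rw [Finset.range_eq_Ico]
      exact Finset.sum_congr rfl fun i hi => by
        rw [hag i (Finset.mem_Ico.mp hi).2.le]
    rw [hsc, hag k le_rfl] at heq
    exact heq
  refine ⟨p, hp0, hstep, ?_⟩
  intro m k hmk
  have hupk : UpRight p k := fun i _ => hstep i
  have w1 : (∑ i ∈ Finset.Ico m k, ω (p i)) ∈ Sset ω (p m) (p k) :=
    sumIco_mem ω hupk hmk le_rfl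
  have hle1 := le_G w1
  have hGm := G_mem ⟨_, w1⟩
  have w0 : (∑ i ∈ Finset.Ico 0 m, ω (p i)) ∈ Sset ω x (p m) := by
    have := sumIco_mem ω (show UpRight p m from fun i _ => hstep i) (Nat.zero_le m) le_rfl
    rwa [hp0] at this
  have hle2 := le_G (add_mem w0 hGm)
  rw [show G ω x (p k) = ∑ i ∈ Finset.range k, ω (p i) from (hpref k).symm] at hle2
  rw [show ∑ i ∈ Finset.range k, ω (p i)
      = ∑ i ∈ Finset.Ico 0 m, ω (p i) + ∑ i ∈ Finset.Ico m k, ω (p i) from by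
    rw [Finset.sum_Ico_consecutive _ (Nat.zero_le m) hmk, ← Finset.range_eq_Ico]] at hle2
  linarith
end

section
/- Stability of queues: let {U_n : n ≥ 0} be a stationary ergodic real sequence with E[U_0] < 0, let W_0 ∈ [0,∞) be a random variable, and define W_{n+1} = (W_n + U_n)⁺. Then W_n / n → 0 almost surely as n → ∞. -/
open MeasureTheory Filter Topology

section Aux

variable {Ω : Type*} [MeasurableSpace Ω] {μ : Measure Ω} [IsProbabilityMeasure μ] {T : Ω → Ω}

/-- Running maximum `max_{1 ≤ k ≤ N+1} S_k g` defined recursively. -/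
noncomputable def quPhi (T : Ω → Ω) (g : Ω → ℝ) : ℕ → Ω → ℝ
  | 0 => g
  | (N + 1) => fun x => g x + max (quPhi T g N (T x)) 0

lemma quPhi_mono (g : Ω → ℝ) (N : ℕ) (x : Ω) : quPhi T g N x ≤ quPhi T g (N + 1) x := by
  induction N generalizing x with
  | zero => simpa [quPhi] using le_max_right (quPhi T g 0 (T x)) 0
  | succ N ih =>
    simp only [quPhi]
    exact add_le_add_right (max_le_max (ih (T x)) le_rfl) _

lemma birkhoffSum_le_quPhi (g : Ω → ℝ) (n : ℕ) (x : Ω) :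
    birkhoffSum T g (n + 1) x ≤ quPhi T g n x := by
  induction n generalizing x with
  | zero => simp [quPhi, birkhoffSum_one]
  | succ n ih =>
    rw [birkhoffSum_succ']
    calc g x + birkhoffSum T g (n + 1) (T x) ≤ g x + max (quPhi T g n (T x)) 0 := by
          exact add_le_add_right (le_trans (ih (T x)) (le_max_left _ _)) _
      _ = quPhi T g (n + 1) x := rfl

lemma quPhi_measurable (hT : Measurable T) {g : Ω → ℝ} (hg : Measurable g) (N : ℕ) :
    Measurable (quPhi T g N) := by
  induction N with
  | zero => exact hg
  | succ N ih => exact hg.add ((ih.comp hT).max measurable_const)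

lemma quPhi_integrable (hT : MeasurePreserving T μ μ) {g : Ω → ℝ} (hmg : Measurable g)
    (hg : Integrable g μ) (N : ℕ) : Integrable (quPhi T g N) μ := by
  induction N with
  | zero => exact hg
  | succ N ih =>
    have h1 : Integrable (quPhi T g N ∘ T) μ :=
      (hT.integrable_comp ih.aestronglyMeasurable).2 ih
    exact hg.add h1.pos_part

/-- One-sided Birkhoff: for an ergodic map and integrable `g` with negative mean,
the Birkhoff sums are a.e. bounded above. -/
lemma key_meas (hT : Ergodic T μ) {g : Ω → ℝ} (hmg : Measurable g) (hg : Integrable g μ)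
    (hmean : ∫ x, g x ∂μ < 0) :
    ∀ᵐ x ∂μ, ∃ C : ℝ, ∀ n, birkhoffSum T g n x ≤ C := by
  have hTm : Measurable T := hT.toMeasurePreserving.measurable
  have hSmeas : ∀ n, Measurable (fun x => birkhoffSum T g n x) := by
    intro n
    exact Finset.measurable_sum _ fun i _ => hmg.comp (hTm.iterate i)
  -- the set where the sums are unbounded above
  set A : Set Ω := {x | ∀ k : ℕ, ∃ n, (k : ℝ) < birkhoffSum T g n x} with hA
  have hAmeas : MeasurableSet A := by
    have : A = ⋂ k : ℕ, ⋃ n : ℕ, {x | (k : ℝ) < birkhoffSum T g n x} := by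
      ext x; simp [hA, Set.mem_iInter, Set.mem_iUnion]
    rw [this]
    exact MeasurableSet.iInter fun k => MeasurableSet.iUnion fun n =>
      measurableSet_lt measurable_const (hSmeas n)
  -- A is unbounded-above set in the real sense
  have hAiff : ∀ x, x ∈ A ↔ ∀ C : ℝ, ∃ n, C < birkhoffSum T g n x := by
    intro x
    constructor
    · intro h C
      obtain ⟨k, hk⟩ := exists_nat_ge C
      obtain ⟨n, hn⟩ := h k
      exact ⟨n, lt_of_le_of_lt hk hn⟩
    · intro h k; exact h k
  -- A is exactly invariant
  have hAinv : T ⁻¹' A = A := by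
    ext x
    simp only [Set.mem_preimage, hAiff]
    constructor
    · intro h C
      obtain ⟨n, hn⟩ := h (C - g x)
      refine ⟨n + 1, ?_⟩
      rw [birkhoffSum_succ']
      linarith
    · intro h C
      obtain ⟨r, hr⟩ := exists_nat_ge (max C 0 + g x)
      obtain ⟨n, hn⟩ := h r
      have hr0 : max C 0 + g x ≤ (r : ℝ) := hr
      have hgood : max C 0 + g x < birkhoffSum T g n x := lt_of_le_of_lt hr0 hn
      match n with
      | 0 =>
        exfalso
        rw [birkhoffSum_zero] at hn
        exact absurd hn (not_lt.mpr (Nat.cast_nonneg r))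
      | (m + 1) =>
        refine ⟨m, ?_⟩
        rw [birkhoffSum_succ'] at hgood
        have := le_max_left C 0
        linarith
  -- ergodic dichotomy
  rcases hT.toPreErgodic.measure_self_or_compl_eq_zero hAmeas hAinv with h0 | h1
  · -- μ A = 0 : done
    filter_upwards [MeasureTheory.measure_eq_zero_iff_ae_notMem.mp h0] with x hx
    simp only [hA, Set.mem_setOf_eq, not_forall, not_exists, not_lt] at hx
    obtain ⟨k, hk⟩ := hx
    exact ⟨k, hk⟩
  · -- μ Aᶜ = 0 : contradiction via maximal ergodic theorem
    exfalso
    set Φ := quPhi T g with hΦ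
    set B : ℕ → Set Ω := fun N => {x | 0 < Φ N x} with hB
    have hBmeas : ∀ N, MeasurableSet (B N) :=
      fun N => measurableSet_lt measurable_const (quPhi_measurable hTm hmg N)
    have hBmono : Monotone B := by
      apply monotone_nat_of_le_succ
      intro N x hx
      exact lt_of_lt_of_le hx (quPhi_mono g N x)
    -- maximal ergodic inequality : 0 ≤ ∫_{B N} g
    have hmax : ∀ N, 0 ≤ ∫ x in B N, g x ∂μ := by
      intro N
      set F : Ω → ℝ := fun x => max (Φ N x) 0 - max (Φ N (T x)) 0 with hF
      have hint : Integrable (quPhi T g N) μ := quPhi_integrable hT.toMeasurePreserving hmg hg N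
      have hintT : Integrable (fun x => Φ N (T x)) μ :=
        (hT.toMeasurePreserving.integrable_comp hint.aestronglyMeasurable).2 hint
      have hintF : Integrable F μ := hint.pos_part.sub hintT.pos_part
      have hintFpos : Integrable (fun x => max (Φ N (T x)) 0) μ := hintT.pos_part
      -- ∫ F = 0 by measure preservation
      have hF0 : ∫ x, F x ∂μ = 0 := by
        rw [hF]
        rw [integral_sub hint.pos_part hintFpos]
        have : ∫ x, max (Φ N (T x)) 0 ∂μ = ∫ x, max (Φ N x) 0 ∂μ := by
          have hmap : Measure.map T μ = μ := hT.toMeasurePreserving.map_eq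
          calc ∫ x, max (Φ N (T x)) 0 ∂μ
              = ∫ y, max (Φ N y) 0 ∂(Measure.map T μ) := by
                rw [integral_map hTm.aemeasurable]
                rw [hmap]
                exact (((quPhi_measurable hTm hmg N).max measurable_const)).aestronglyMeasurable
            _ = ∫ x, max (Φ N x) 0 ∂μ := by rw [hmap]
        rw [this]; ring
      -- ∫ F ≤ ∫_{B N} F
      have hsplit : ∫ x, F x ∂μ = (∫ x in B N, F x ∂μ) + ∫ x in (B N)ᶜ, F x ∂μ :=
        (integral_add_compl (hBmeas N) hintF).symm
      have hcompl : ∫ x in (B N)ᶜ, F x ∂μ ≤ 0 := by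
        apply setIntegral_nonpos (hBmeas N).compl
        intro x hx
        simp only [hB, Set.mem_compl_iff, Set.mem_setOf_eq, not_lt] at hx
        have : max (Φ N x) 0 = 0 := max_eq_right hx
        rw [hF]
        simp only [this]
        simp [le_max_right]
      have hle : ∫ x in B N, F x ∂μ ≤ ∫ x in B N, g x ∂μ := by
        apply setIntegral_mono_on hintF.integrableOn hg.integrableOn (hBmeas N)
        intro x hx
        simp only [hB, Set.mem_setOf_eq] at hx
        have h1 : max (Φ N x) 0 = Φ N x := max_eq_left hx.le
        have h2 : Φ N x ≤ Φ (N + 1) x := quPhi_mono g N x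
        have h3 : Φ (N + 1) x = g x + max (Φ N (T x)) 0 := rfl
        rw [hF]; dsimp only
        rw [h1]
        linarith
      linarith
    -- pass to the limit
    have hlim : Tendsto (fun N => ∫ x in B N, g x ∂μ) atTop (𝓝 (∫ x in ⋃ N, B N, g x ∂μ)) :=
      tendsto_setIntegral_of_monotone hBmeas hBmono hg.integrableOn
    have hUnion_nonneg : 0 ≤ ∫ x in ⋃ N, B N, g x ∂μ :=
      le_of_tendsto_of_tendsto tendsto_const_nhds hlim (Eventually.of_forall hmax)
    -- A ⊆ ⋃ B N
    have hsub : A ⊆ ⋃ N, B N := by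
      intro x hx
      obtain ⟨n, hn⟩ := hx 0
      simp only [Nat.cast_zero] at hn
      match n with
      | 0 => rw [birkhoffSum_zero] at hn; exact absurd hn (lt_irrefl 0)
      | (m + 1) =>
        refine Set.mem_iUnion.mpr ⟨m, ?_⟩
        exact lt_of_lt_of_le hn (birkhoffSum_le_quPhi g m x)
    have hnull : μ (⋃ N, B N)ᶜ = 0 :=
      measure_mono_null (Set.compl_subset_compl.mpr hsub) h1
    have : ∫ x, g x ∂μ = ∫ x in ⋃ N, B N, g x ∂μ := by
      rw [← integral_add_compl (MeasurableSet.iUnion_of_monotone hBmono hBmeas) hg]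
      have : ∫ x in (⋃ N, B N)ᶜ, g x ∂μ = 0 := by
        rw [Measure.restrict_eq_zero.mpr hnull]
        exact integral_zero_measure _
      rw [this, add_zero]
    linarith [hUnion_nonneg, this ▸ hmean]

/-- Version of `key_meas` for merely integrable `g`. -/
lemma key (hT : Ergodic T μ) {g : Ω → ℝ} (hg : Integrable g μ) (hmean : ∫ x, g x ∂μ < 0) :
    ∀ᵐ x ∂μ, ∃ C : ℝ, ∀ n, birkhoffSum T g n x ≤ C := by
  set g' := hg.1.mk g with hg'
  have hgg' : g =ᵐ[μ] g' := hg.1.ae_eq_mk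
  have hmg' : Measurable g' := hg.1.stronglyMeasurable_mk.measurable
  have hgint' : Integrable g' μ := hg.congr hgg'
  have hmean' : ∫ x, g' x ∂μ < 0 := by
    rwa [integral_congr_ae hgg'] at hmean
  have hSeq : ∀ᵐ x ∂μ, ∀ n, birkhoffSum T g n x = birkhoffSum T g' n x := by
    rw [ae_all_iff]
    intro n
    have : ∀ i : ℕ, (fun x => g (T^[i] x)) =ᵐ[μ] fun x => g' (T^[i] x) := by
      intro i
      exact ((hT.toMeasurePreserving.iterate i).quasiMeasurePreserving).ae_eq_comp hgg'
    have := eventually_countable_forall.mpr this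
    filter_upwards [this] with x hx
    unfold birkhoffSum
    exact Finset.sum_congr rfl fun i _ => hx i
  filter_upwards [key_meas hT hmg' hgint' hmean', hSeq] with x hx hEq
  obtain ⟨C, hC⟩ := hx
  exact ⟨C, fun n => (hEq n) ▸ hC n⟩

end Aux

/-- Stability of queues: for a stationary ergodic driving sequence with negative
mean, the waiting times satisfy `W n / n → 0` almost surely. -/
theorem queue_stability {Ω : Type*} [MeasurableSpace Ω] (μ : Measure Ω)
    [IsProbabilityMeasure μ] (T : Ω → Ω) (hT : Ergodic T μ)
    (U : Ω → ℝ) (hU : Integrable U μ) (hmean : ∫ ω, U ω ∂μ < 0)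
    (W : ℕ → Ω → ℝ) (hW0 : ∀ ω, 0 ≤ W 0 ω)
    (hWrec : ∀ n ω, W (n + 1) ω = max (W n ω + U (T^[n] ω)) 0) :
    ∀ᵐ ω ∂μ, Tendsto (fun n : ℕ => W n ω / n) atTop (nhds 0) := by
  set m : ℝ := ∫ ω, U ω ∂μ with hm
  -- birkhoff sums of shifted functions
  have hshift : ∀ (c : ℝ) (n : ℕ) (x : Ω),
      birkhoffSum T (fun y => U y - c) n x = birkhoffSum T U n x - n * c := by
    intro c n x
    unfold birkhoffSum
    rw [Finset.sum_sub_distrib, Finset.sum_const, Finset.card_range, nsmul_eq_mul]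
  have hint_shift : ∀ c : ℝ, Integrable (fun y => U y - c) μ :=
    fun c => hU.sub (integrable_const c)
  have hmean_shift : ∀ c : ℝ, ∫ x, (U x - c) ∂μ = m - c := by
    intro c
    rw [integral_sub hU (integrable_const c), integral_const]
    simp [hm]
  have hneg_shift : ∀ c : ℝ, Integrable (fun y => c - U y) μ :=
    fun c => (integrable_const c).sub hU
  have hmean_neg : ∀ c : ℝ, ∫ x, (c - U x) ∂μ = c - m := by
    intro c
    rw [integral_sub (integrable_const c) hU, integral_const]
    simp [hm]
  have hnegbs : ∀ (c : ℝ) (n : ℕ) (x : Ω),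
      birkhoffSum T (fun y => c - U y) n x = n * c - birkhoffSum T U n x := by
    intro c n x
    unfold birkhoffSum
    rw [Finset.sum_sub_distrib, Finset.sum_const, Finset.card_range, nsmul_eq_mul]
  -- the combined a.e. event over positive rationals
  have hAE : ∀ᵐ x ∂μ, ∀ q : ℚ, 0 < q →
      (∃ C : ℝ, ∀ n, birkhoffSum T U n x ≤ n * (m + q) + C) ∧
      (∃ C' : ℝ, ∀ n, n * (m - q) - C' ≤ birkhoffSum T U n x) := by
    rw [ae_all_iff]
    intro q
    by_cases hq : 0 < q
    · have h1 := key hT (hint_shift (m + q)) (by rw [hmean_shift]; push_cast; linarith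
        [ (by exact_mod_cast hq : (0:ℝ) < (q:ℝ)) ])
      have h2 := key hT (hneg_shift (m - q)) (by rw [hmean_neg]; push_cast; linarith
        [ (by exact_mod_cast hq : (0:ℝ) < (q:ℝ)) ])
      filter_upwards [h1, h2] with x hx1 hx2
      intro _
      constructor
      · obtain ⟨C, hC⟩ := hx1
        refine ⟨C, fun n => ?_⟩
        have := hC n
        rw [hshift] at this
        linarith
      · obtain ⟨C', hC'⟩ := hx2
        refine ⟨C', fun n => ?_⟩
        have := hC' n
        rw [hnegbs] at this
        linarith
    · filter_upwards with x hq'; exact absurd hq' hq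
  filter_upwards [hAE] with ω hω
  -- pointwise facts about W
  have hWnonneg : ∀ n, 0 ≤ W n ω := by
    intro n
    induction n with
    | zero => exact hW0 ω
    | succ n _ => rw [hWrec]; exact le_max_right _ _
  set S : ℕ → ℝ := fun n => birkhoffSum T U n ω with hS
  have hSsucc : ∀ n, S (n + 1) = S n + U (T^[n] ω) := fun n => birkhoffSum_succ T U n ω
  -- running minimum
  set M : ℕ → ℝ := fun n => Nat.rec (S 0) (fun k ih => min (S (k + 1)) ih) n with hM
  have hM0 : M 0 = S 0 := rfl
  have hMsucc : ∀ n, M (n + 1) = min (S (n + 1)) (M n) := fun n => rfl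
  have hWle : ∀ n, W n ω ≤ W 0 ω + S n - M n := by
    intro n
    induction n with
    | zero => rw [hM0]; linarith
    | succ n ih =>
      rw [hWrec]
      have hmr : M (n + 1) ≤ M n := by rw [hMsucc]; exact min_le_right _ _
      have hml : M (n + 1) ≤ S (n + 1) := by rw [hMsucc]; exact min_le_left _ _
      have hs := hSsucc n
      have hw0 := hW0 ω
      apply max_le <;> linarith
  -- convergence
  rw [Metric.tendsto_atTop]
  intro ε hε
  obtain ⟨q, hq0, hqε⟩ := exists_rat_btwn (show (0:ℝ) < ε / 4 by linarith)
  have hq0' : 0 < q := by exact_mod_cast hq0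
  obtain ⟨⟨C, hC⟩, ⟨C', hC'⟩⟩ := hω q hq0'
  -- bound on M from below
  have hmq : m - (q : ℝ) ≤ 0 := by
    have h0q : (0:ℝ) < q := by exact_mod_cast hq0'
    linarith
  have hMlow : ∀ n : ℕ, (n : ℝ) * (m - q) - C' ≤ M n := by
    intro n
    induction n with
    | zero => exact hC' 0
    | succ n ih =>
      rw [hMsucc]
      apply le_min
      · exact hC' (n + 1)
      · have hstep : ((n : ℝ) + 1) * (m - (q:ℝ)) ≤ (n : ℝ) * (m - (q:ℝ)) := by nlinarith
        push_cast
        linarith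
  -- W n ω ≤ W 0 ω + C + C' + 2 q n
  have hWfinal : ∀ n, W n ω ≤ W 0 ω + C + C' + 2 * q * n := by
    intro n
    have h1 := hWle n
    have h2 := hC n
    have h3 := hMlow n
    have : S n - M n ≤ (n:ℝ) * (m + q) + C - ((n:ℝ) * (m - q) - C') := by linarith
    have h4 : (n:ℝ) * (m + q) + C - ((n:ℝ) * (m - q) - C') = 2 * q * n + C + C' := by ring
    linarith
  -- choose N
  set D : ℝ := W 0 ω + C + C' with hD
  obtain ⟨N, hN⟩ := exists_nat_gt (max (D / (ε / 4)) 1)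
  refine ⟨N, fun n hn => ?_⟩
  have hn1 : 1 ≤ n := by
    have : (1:ℝ) ≤ N := le_of_lt (lt_of_le_of_lt (le_max_right _ _) hN)
    have : (1:ℝ) ≤ n := le_trans this (by exact_mod_cast hn)
    exact_mod_cast this
  have hnpos : (0:ℝ) < n := by positivity
  have hub : W n ω / n ≤ D / n + 2 * q := by
    have h := hWfinal n
    have h2 : W n ω ≤ D + 2 * q * n := by rw [hD]; linarith
    have h3 : (D + 2 * q * n) / n = D / n + 2 * q := by field_simp
    rw [← h3]
    exact (div_le_div_iff_of_pos_right hnpos).mpr h2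
  have hDn : D / n < ε / 4 := by
    have hDN : D / (ε/4) < N := lt_of_le_of_lt (le_max_left _ _) hN
    have hNn : (N:ℝ) ≤ n := by exact_mod_cast hn
    have : D / (ε/4) < n := lt_of_lt_of_le hDN hNn
    rw [div_lt_iff₀ hnpos]
    calc D = (D / (ε/4)) * (ε/4) := by field_simp
      _ < n * (ε/4) := by
          apply mul_lt_mul_of_pos_right this (by linarith)
      _ = ε / 4 * n := by ring
  have h2q : 2 * (q:ℝ) < ε / 2 := by linarith
  have hlt : W n ω / n < ε := by linarith
  have hge : 0 ≤ W n ω / n := div_nonneg (hWnonneg n) hnpos.le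
  rw [Real.dist_eq, sub_zero, abs_of_nonneg hge]
  exact hlt
end

section
/- Cocycle ergodic theorem along rays: let B : Ω × ℤ² × ℤ² → ℝ be a stationary L¹ cocycle, i.e., B(ω,x,y) + B(ω,y,z) = B(ω,x,z), B(T_z ω, x, y) = B(ω, x+z, y+z), and E|B(·,x,y)| < ∞, where {T_z} is an ergodic group of measure-preserving shifts. Then for every ξ ∈ ℤ₊², B(ω, 0, nξ)/n → E[B(0,e₁)]·(ξ·e₁) + E[B(0,e₂)]·(ξ·e₂) almost surely as n → ∞. -/
open MeasureTheory Filter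

section Aux

variable {Ω : Type*} [MeasurableSpace Ω] {μ : Measure Ω}

private lemma integral_comp_mp {τ : Ω → Ω} (hτ : MeasurePreserving τ μ μ)
    {g : Ω → ℝ} (hg : AEStronglyMeasurable g μ) :
    ∫ ω, g (τ ω) ∂μ = ∫ ω, g ω ∂μ := by
  conv_rhs => rw [← hτ.map_eq]
  rw [integral_map hτ.measurable.aemeasurable]
  rw [hτ.map_eq]; exact hg

private lemma integrable_comp_mp {τ : Ω → Ω} (hτ : MeasurePreserving τ μ μ)
    {g : Ω → ℝ} (hg : Integrable g μ) : Integrable (fun ω => g (τ ω)) μ := by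
  have : Integrable g (Measure.map τ μ) := by rwa [hτ.map_eq]
  rwa [integrable_map_measure (by rw [hτ.map_eq]; exact hg.1) hτ.measurable.aemeasurable] at this

private lemma zero_one (T : ℤ × ℤ → Ω → Ω)
    (hTmeas : ∀ z, MeasurePreserving (T z) μ μ)
    (hTgroup : ∀ z w : ℤ × ℤ, ∀ ω : Ω, T z (T w ω) = T (z + w) ω)
    (hTzero : ∀ ω : Ω, T 0 ω = ω)
    (hErg : ∀ s : Set Ω, MeasurableSet s → (∀ z : ℤ × ℤ, T z ⁻¹' s = s) →
      μ s = 0 ∨ μ s = 1)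
    {A : Set Ω} (hA : MeasurableSet A)
    (hq : ∀ z : ℤ × ℤ, μ ((T z ⁻¹' A) \ A) = 0) : μ A = 0 ∨ μ A = 1 := by
  set W : Set Ω := ⋃ z : ℤ × ℤ, T z ⁻¹' A with hW
  have hWm : MeasurableSet W := MeasurableSet.iUnion fun z => (hTmeas z).measurable hA
  have hWinv : ∀ w : ℤ × ℤ, T w ⁻¹' W = W := by
    intro w
    ext ω
    simp only [hW, Set.mem_iUnion, Set.mem_preimage]
    constructor
    · rintro ⟨z, hz⟩
      exact ⟨z + w, by rwa [hTgroup z w ω] at hz⟩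
    · rintro ⟨z, hz⟩
      exact ⟨z - w, by rwa [hTgroup (z - w) w ω, sub_add_cancel]⟩
  have hAW : A ⊆ W := by
    intro ω hω
    exact Set.mem_iUnion.2 ⟨0, by simpa [hTzero ω] using hω⟩
  have hWA : μ (W \ A) = 0 := by
    have : W \ A ⊆ ⋃ z : ℤ × ℤ, (T z ⁻¹' A) \ A := by
      rw [hW, Set.iUnion_diff]
    exact measure_mono_null this (measure_iUnion_null hq)
  have hμ : μ W = μ A := by
    have h1 : μ W ≤ μ A := by
      calc μ W ≤ μ (A ∪ (W \ A)) := measure_mono (by intro x hx; by_cases h : x ∈ A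
                                                     · exact Or.inl h
                                                     · exact Or.inr ⟨hx, h⟩)
        _ ≤ μ A + μ (W \ A) := measure_union_le _ _
        _ = μ A := by rw [hWA, add_zero]
    exact le_antisymm h1 (measure_mono hAW)
  rcases hErg W hWm hWinv with h | h
  · exact Or.inl (by rw [← hμ]; exact h)
  · exact Or.inr (by rw [← hμ]; exact h)


private lemma bc_div [IsProbabilityMeasure μ] {g : Ω → ℝ} (hgm : Measurable g)
    (hgi : Integrable g μ) (τ : ℕ → Ω → Ω) (hτ : ∀ n, MeasurePreserving (τ n) μ μ) :
    ∀ᵐ ω ∂μ, Tendsto (fun n : ℕ => g (τ n ω) / n) atTop (nhds 0) := by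
  have key : ∀ c : ℝ, 0 < c → ∀ᵐ ω ∂μ, ∀ᶠ n : ℕ in atTop, |g (τ n ω)| ≤ c * n := by
    intro c hc
    set X : Ω → ℝ := fun ω => |g ω| / c with hX
    have hXi : Integrable X μ := hgi.abs.div_const c
    have hXnn : 0 ≤ X := fun ω => div_nonneg (abs_nonneg _) hc.le
    have htsum : (∑' j : ℕ, μ {ω | X ω ∈ Set.Ioi (j : ℝ)}) < ⊤ := by
      letI : MeasureSpace Ω := ⟨μ⟩
      exact ProbabilityTheory.tsum_prob_mem_Ioi_lt_top hXi hXnn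
    set s : ℕ → Set Ω := fun n => τ n ⁻¹' {ω | X ω ∈ Set.Ioi (n : ℝ)} with hs
    have hμs : ∀ n, μ (s n) = μ {ω | X ω ∈ Set.Ioi (n : ℝ)} := by
      intro n
      exact (hτ n).measure_preimage
        (measurableSet_lt measurable_const (hgm.abs.div_const c)).nullMeasurableSet
    have hsum : (∑' n : ℕ, μ (s n)) ≠ ⊤ := by
      rw [funext hμs]; exact htsum.ne
    have hlim : μ (limsup s atTop) = 0 := measure_limsup_atTop_eq_zero hsum
    have : ∀ᵐ ω ∂μ, ω ∉ limsup s atTop := by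
      rw [ae_iff]; simpa using hlim
    filter_upwards [this] with ω hω
    rw [limsup_eq_iInf_iSup_of_nat] at hω
    simp only [Set.iInf_eq_iInter, Set.iSup_eq_iUnion, Set.mem_iInter, Set.mem_iUnion,
      not_forall, not_exists] at hω
    obtain ⟨N, hN⟩ := hω
    filter_upwards [eventually_ge_atTop N] with n hn
    have := hN n hn
    simp only [s, Set.mem_preimage, Set.mem_setOf_eq, Set.mem_Ioi, not_lt, X] at this
    calc |g (τ n ω)| = |g (τ n ω)| / c * c := by field_simp
      _ ≤ (n : ℝ) * c := by gcongr
      _ = c * n := mul_comm _ _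
  have key2 : ∀ᵐ ω ∂μ, ∀ m : ℕ, ∀ᶠ n : ℕ in atTop, |g (τ n ω)| ≤ (1 / (m + 1 : ℝ)) * n := by
    rw [ae_all_iff]
    intro m
    exact key _ (by positivity)
  filter_upwards [key2] with ω hω
  rw [Metric.tendsto_atTop]
  intro ε hε
  obtain ⟨m, hm⟩ := exists_nat_one_div_lt hε
  obtain ⟨N, hN⟩ := (hω m).exists_forall_of_atTop
  refine ⟨max N 1, fun n hn => ?_⟩
  have hn1 : 1 ≤ n := le_trans (le_max_right _ _) hn
  have hnN : N ≤ n := le_trans (le_max_left _ _) hn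
  have hnpos : (0 : ℝ) < n := by exact_mod_cast hn1
  rw [Real.dist_eq, sub_zero, abs_div, abs_of_nonneg (le_of_lt hnpos)]
  calc |g (τ n ω)| / n ≤ (1 / (m + 1 : ℝ)) * n / n := by gcongr; exact hN n hnN
    _ = 1 / (m + 1 : ℝ) := by rw [mul_div_assoc, div_self (ne_of_gt hnpos), mul_one]
    _ < ε := hm

private noncomputable def mSup {Ω : Type*} (φ : ℕ → Ω → ℝ) : ℕ → Ω → ℝ
  | 0 => fun _ => 0
  | N + 1 => fun ω => max (mSup φ N ω) (φ (N + 1) ω)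

private lemma mSup_nonneg {φ : ℕ → Ω → ℝ} : ∀ N ω, 0 ≤ mSup φ N ω := by
  intro N
  induction N with
  | zero => intro ω; exact le_refl 0
  | succ N ih => intro ω; exact le_trans (ih ω) (le_max_left _ _)

private lemma mSup_mono {φ : ℕ → Ω → ℝ} (N : ℕ) (ω : Ω) :
    mSup φ N ω ≤ mSup φ (N + 1) ω := le_max_left _ _

private lemma garsia [IsProbabilityMeasure μ] {τ : Ω → Ω} (hτ : MeasurePreserving τ μ μ)
    {f : Ω → ℝ} (hfm : Measurable f) (hfi : Integrable f μ)
    (h : ∀ᵐ ω ∂μ, ∃ n : ℕ, 0 < ∑ k ∈ Finset.range n, f (τ^[k] ω)) :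
    0 ≤ ∫ ω, f ω ∂μ := by
  set φ : ℕ → Ω → ℝ := fun n ω => ∑ k ∈ Finset.range n, f (τ^[k] ω) with hφ
  have hφrec : ∀ n ω, φ (n + 1) ω = f ω + φ n (τ ω) := by
    intro n ω
    simp only [hφ]
    rw [Finset.sum_range_succ']
    simp only [Function.iterate_succ_apply, Function.iterate_zero_apply]
    ring
  have hφmeas : ∀ n, Measurable (φ n) :=
    fun n => Finset.measurable_sum _ fun k _ => hfm.comp (hτ.measurable.iterate k)
  have hφint : ∀ n, Integrable (φ n) μ := by
    intro n
    apply integrable_finset_sum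
    intro k _
    exact integrable_comp_mp (hτ.iterate k) hfi
  have hMmeas : ∀ N, Measurable (mSup φ N) := by
    intro N
    induction N with
    | zero => exact measurable_const
    | succ N ih => exact ih.max (hφmeas (N + 1))
  have hMint : ∀ N, Integrable (mSup φ N) μ := by
    intro N
    induction N with
    | zero => exact integrable_const 0
    | succ N ih => exact ih.sup (hφint (N + 1))
  have hφleM : ∀ n ω, φ (n + 1) ω ≤ mSup φ (n + 1) ω := fun n ω => le_max_right _ _
  -- the key maximal inequality
  have key : ∀ N ω, 0 < mSup φ (N + 1) ω → mSup φ (N + 1) ω ≤ f ω + mSup φ N (τ ω) := by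
    intro N
    induction N with
    | zero =>
      intro ω hpos
      have h0 : mSup φ 0 ω = 0 := rfl
      have : mSup φ 1 ω = max 0 (φ 1 ω) := rfl
      rw [this] at hpos ⊢
      have hφ1 : φ 1 ω = f ω := by
        have := hφrec 0 ω
        simpa [hφ] using this
      have : max 0 (φ 1 ω) = φ 1 ω := by
        rcases max_cases 0 (φ 1 ω) with ⟨he, _⟩ | ⟨he, _⟩
        · exfalso; rw [he] at hpos; exact lt_irrefl 0 hpos
        · exact he
      rw [this, hφ1]
      have : mSup φ 0 (τ ω) = 0 := rfl
      rw [this, add_zero]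
    | succ N ih =>
      intro ω hpos
      have hdef : mSup φ (N + 2) ω = max (mSup φ (N + 1) ω) (φ (N + 2) ω) := rfl
      have hb : φ (N + 2) ω ≤ f ω + mSup φ (N + 1) (τ ω) := by
        rw [hφrec (N + 1) ω]
        linarith [hφleM N (τ ω)]
      rcases le_or_gt (mSup φ (N + 1) ω) 0 with hle | hgt
      · have : mSup φ (N + 2) ω = φ (N + 2) ω := by
          rw [hdef]
          rcases max_cases (mSup φ (N + 1) ω) (φ (N + 2) ω) with ⟨he, _⟩ | ⟨he, _⟩
          · exfalso; rw [hdef, he] at hpos; exact absurd hpos (not_lt.2 hle)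
          · exact he
        rw [this]; exact hb
      · have ha : mSup φ (N + 1) ω ≤ f ω + mSup φ (N + 1) (τ ω) :=
          le_trans (ih ω hgt) (by linarith [mSup_mono (φ := φ) N (τ ω)])
        rw [hdef]; exact max_le ha hb
  set E : ℕ → Set Ω := fun N => {ω | 0 < mSup φ (N + 1) ω} with hE
  have hEm : ∀ N, MeasurableSet (E N) := fun N => measurableSet_lt measurable_const (hMmeas (N + 1))
  have hEmono : Monotone E := by
    apply monotone_nat_of_le_succ
    intro N ω hω
    exact lt_of_lt_of_le hω (mSup_mono (N + 1) ω)
  -- each set integral is nonneg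
  have step1 : ∀ N, 0 ≤ ∫ ω in E N, f ω ∂μ := by
    intro N
    have hMτint : Integrable (fun ω => mSup φ N (τ ω)) μ := integrable_comp_mp hτ (hMint N)
    have h1 : ∫ ω in E N, (mSup φ (N + 1) ω - mSup φ N (τ ω)) ∂μ ≤ ∫ ω in E N, f ω ∂μ := by
      apply setIntegral_mono_on ((hMint (N + 1)).sub hMτint).integrableOn hfi.integrableOn (hEm N)
      intro ω hω
      have := key N ω hω
      simp only [Pi.sub_apply]
      linarith
    have h2 : ∫ ω in E N, (mSup φ (N + 1) ω - mSup φ N (τ ω)) ∂μ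
        = ∫ ω in E N, mSup φ (N + 1) ω ∂μ - ∫ ω in E N, mSup φ N (τ ω) ∂μ :=
      integral_sub (hMint (N + 1)).integrableOn hMτint.integrableOn
    have h3 : ∫ ω in E N, mSup φ (N + 1) ω ∂μ = ∫ ω, mSup φ (N + 1) ω ∂μ := by
      have := integral_add_compl (hEm N) (hMint (N + 1))
      have hz : ∫ ω in (E N)ᶜ, mSup φ (N + 1) ω ∂μ = 0 := by
        apply setIntegral_eq_zero_of_forall_eq_zero
        intro ω hω
        have : ¬ 0 < mSup φ (N + 1) ω := hω
        exact le_antisymm (not_lt.1 this) (mSup_nonneg (N + 1) ω)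
      linarith
    have h4 : ∫ ω in E N, mSup φ N (τ ω) ∂μ ≤ ∫ ω, mSup φ N (τ ω) ∂μ :=
      setIntegral_le_integral hMτint (Eventually.of_forall fun ω => mSup_nonneg N (τ ω))
    have h5 : ∫ ω, mSup φ N (τ ω) ∂μ = ∫ ω, mSup φ N ω ∂μ :=
      integral_comp_mp hτ (hMmeas N).aestronglyMeasurable
    have h6 : ∫ ω, mSup φ N ω ∂μ ≤ ∫ ω, mSup φ (N + 1) ω ∂μ :=
      integral_mono (hMint N) (hMint (N + 1)) fun ω => mSup_mono N ω
    linarith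
  -- union of E N has full measure
  have hU : ∀ᵐ ω ∂μ, ω ∈ ⋃ N, E N := by
    filter_upwards [h] with ω hω
    obtain ⟨n, hn⟩ := hω
    rcases n with _ | m
    · exfalso; simpa [hφ] using hn
    · exact Set.mem_iUnion.2 ⟨m, lt_of_lt_of_le hn (hφleM m ω)⟩
  have hUnull : μ (⋃ N, E N)ᶜ = 0 := ae_iff.1 hU
  have htend : Tendsto (fun N => ∫ ω in E N, f ω ∂μ) atTop (nhds (∫ ω in ⋃ N, E N, f ω ∂μ)) :=
    tendsto_setIntegral_of_monotone hEm hEmono hfi.integrableOn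
  have hfull : ∫ ω in ⋃ N, E N, f ω ∂μ = ∫ ω, f ω ∂μ := by
    have hadd := integral_add_compl (MeasurableSet.iUnion hEm) hfi
    have hz : ∫ ω in (⋃ N, E N)ᶜ, f ω ∂μ = 0 := by
      rw [Measure.restrict_eq_zero.2 hUnull]
      exact integral_zero_measure f
    linarith
  rw [← hfull]
  exact ge_of_tendsto' htend step1



private lemma main_upper [IsProbabilityMeasure μ] (T : ℤ × ℤ → Ω → Ω)
    (hTmeas : ∀ z, MeasurePreserving (T z) μ μ)
    (hTgroup : ∀ z w : ℤ × ℤ, ∀ ω : Ω, T z (T w ω) = T (z + w) ω)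
    (hTzero : ∀ ω : Ω, T 0 ω = ω)
    (hErg : ∀ s : Set Ω, MeasurableSet s → (∀ z : ℤ × ℤ, T z ⁻¹' s = s) →
      μ s = 0 ∨ μ s = 1)
    (B : Ω → ℤ × ℤ → ℤ × ℤ → ℝ)
    (hmeas : ∀ x y : ℤ × ℤ, Measurable fun ω => B ω x y)
    (hint : ∀ x y : ℤ × ℤ, Integrable (fun ω => B ω x y) μ)
    (hcoc : ∀ ω : Ω, ∀ x y z : ℤ × ℤ, B ω x y + B ω y z = B ω x z)
    (hstat : ∀ ω : Ω, ∀ x y z : ℤ × ℤ, B (T z ω) x y = B ω (x + z) (y + z))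
    (ξ : ℤ × ℤ) :
    ∀ᵐ ω ∂μ, ∀ α : ℚ, (∫ ω', B ω' 0 ξ ∂μ) < (α : ℝ) →
      ∀ᶠ n : ℕ in atTop, B ω 0 ((n : ℤ) • ξ) ≤ (α : ℝ) * n := by
  have hBxx : ∀ (ω : Ω) (x : ℤ × ℤ), B ω x x = 0 := by
    intro ω x
    have := hcoc ω x x x
    linarith
  have hsum : ∀ (ω : Ω) (n : ℕ),
      B ω 0 ((n : ℤ) • ξ) = ∑ k ∈ Finset.range n, B (T ((k : ℤ) • ξ) ω) 0 ξ := by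
    intro ω n
    induction n with
    | zero => simpa using hBxx ω 0
    | succ n ih =>
      have hcast : ((n + 1 : ℕ) : ℤ) • ξ = (n : ℤ) • ξ + ξ := by
        push_cast
        rw [add_smul, one_smul]
      have e1 : B ω 0 ((n : ℤ) • ξ) + B ω ((n : ℤ) • ξ) (((n + 1 : ℕ) : ℤ) • ξ)
          = B ω 0 (((n + 1 : ℕ) : ℤ) • ξ) := hcoc ω 0 _ _
      have e2 : B (T ((n : ℤ) • ξ) ω) 0 ξ = B ω ((n : ℤ) • ξ) (((n + 1 : ℕ) : ℤ) • ξ) := by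
        rw [hstat ω 0 ξ ((n : ℤ) • ξ), zero_add, hcast, add_comm]
      rw [Finset.sum_range_succ, ← ih, e2, e1]
  have hτiter : ∀ (k : ℕ) (ω : Ω), (T ξ)^[k] ω = T ((k : ℤ) • ξ) ω := by
    intro k
    induction k with
    | zero => intro ω; simp [hTzero ω]
    | succ k ih =>
      intro ω
      rw [Function.iterate_succ_apply', ih, hTgroup]
      congr 1
      push_cast
      rw [add_smul, one_smul, add_comm]
  have hcor : ∀ᵐ ω ∂μ, ∀ z : ℤ × ℤ,
      Tendsto (fun n : ℕ => B ω ((n : ℤ) • ξ) ((n : ℤ) • ξ + z) / n) atTop (nhds 0) := by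
    rw [ae_all_iff]
    intro z
    have hbc := bc_div (μ := μ) (hmeas 0 z) (hint 0 z)
      (fun n ω => T ((n : ℤ) • ξ) ω) (fun n => hTmeas _)
    filter_upwards [hbc] with ω hω
    have heq : ∀ n : ℕ, B (T ((n : ℤ) • ξ) ω) 0 z = B ω ((n : ℤ) • ξ) ((n : ℤ) • ξ + z) := by
      intro n
      rw [hstat ω 0 z ((n : ℤ) • ξ), zero_add, add_comm z]
    simpa only [heq] using hω
  set L : ℝ := ∫ ω', B ω' 0 ξ ∂μ with hL
  rw [ae_all_iff]
  intro α
  by_cases hLα : L < (α : ℝ)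
  swap
  · exact Eventually.of_forall fun ω h => absurd h hLα
  obtain ⟨α₀, hα₀L, hα₀α⟩ := exists_rat_btwn hLα
  have hα₀αQ : α₀ < α := by exact_mod_cast hα₀α
  set V : Set Ω := {ω | ∃ β : ℚ, α₀ < β ∧ ∀ N : ℕ, ∃ n : ℕ, N ≤ n ∧
    (β : ℝ) * n < B ω 0 ((n : ℤ) • ξ)} with hV
  have hVm : MeasurableSet V := by
    have hVeq : V = ⋃ β : ℚ, ⋂ N : ℕ, ⋃ n : ℕ,
        {ω | α₀ < β ∧ (N ≤ n ∧ (β : ℝ) * n < B ω 0 ((n : ℤ) • ξ))} := by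
      ext ω
      simp only [hV, Set.mem_setOf_eq, Set.mem_iUnion, Set.mem_iInter]
      constructor
      · rintro ⟨β, hβ, hall⟩
        refine ⟨β, fun N => ?_⟩
        obtain ⟨n, hn1, hn2⟩ := hall N
        exact ⟨n, hβ, hn1, hn2⟩
      · rintro ⟨β, hall⟩
        obtain ⟨n0, hβ, _, _⟩ := hall 0
        refine ⟨β, hβ, fun N => ?_⟩
        obtain ⟨n, _, hn1, hn2⟩ := hall N
        exact ⟨n, hn1, hn2⟩
    rw [hVeq]
    refine MeasurableSet.iUnion fun β => MeasurableSet.iInter fun N =>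
      MeasurableSet.iUnion fun n => ?_
    exact (MeasurableSet.const _).inter ((MeasurableSet.const _).inter
      (measurableSet_lt measurable_const (hmeas _ _)))
  -- quasi-invariance : T z ⁻¹' V \ V is null
  have claim : ∀ ω : Ω, (∀ z : ℤ × ℤ,
      Tendsto (fun n : ℕ => B ω ((n : ℤ) • ξ) ((n : ℤ) • ξ + z) / n) atTop (nhds 0)) →
      ∀ z : ℤ × ℤ, T z ω ∈ V → ω ∈ V := by
    intro ω hP z hTV
    obtain ⟨β, hβ, hall⟩ := hTV
    obtain ⟨β', hβ'1, hβ'2⟩ := exists_between hβ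
    set δ : ℝ := (β : ℝ) - (β' : ℝ) with hδ
    have hδpos : 0 < δ := by
      rw [hδ]
      have : (β' : ℝ) < (β : ℝ) := by exact_mod_cast hβ'2
      linarith
    set c : ℝ := B ω z 0 with hc
    have htend : Tendsto (fun n : ℕ => c / n + B ω ((n : ℤ) • ξ) ((n : ℤ) • ξ + z) / n)
        atTop (nhds 0) := by
      have h1 : Tendsto (fun n : ℕ => c / n) atTop (nhds 0) :=
        tendsto_const_div_atTop_nhds_zero_nat c
      simpa using h1.add (hP z)
    have hev : ∀ᶠ n : ℕ in atTop,
        |c / n + B ω ((n : ℤ) • ξ) ((n : ℤ) • ξ + z) / n| < δ := by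
      have := Metric.tendsto_nhds.mp htend δ hδpos
      simpa [Real.dist_eq] using this
    obtain ⟨N₁, hN₁⟩ := hev.exists_forall_of_atTop
    refine ⟨β', hβ'1, fun N => ?_⟩
    obtain ⟨n, hnN, hn⟩ := hall (max N (max N₁ 1))
    have hnN' : N ≤ n := le_trans (le_max_left _ _) hnN
    have hnN₁ : N₁ ≤ n := le_trans (le_trans (le_max_left _ _) (le_max_right _ _)) hnN
    have hn1 : 1 ≤ n := le_trans (le_trans (le_max_right _ _) (le_max_right _ _)) hnN
    have hnpos : (0 : ℝ) < n := by exact_mod_cast hn1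
    refine ⟨n, hnN', ?_⟩
    -- identity : B (T z ω) 0 (n ξ) = c + B ω 0 (n ξ) + corr n
    have e1 : B (T z ω) 0 ((n : ℤ) • ξ) = B ω z ((n : ℤ) • ξ + z) := by
      rw [hstat ω 0 ((n : ℤ) • ξ) z, zero_add]
    have e2 : B ω z 0 + B ω 0 ((n : ℤ) • ξ + z) = B ω z ((n : ℤ) • ξ + z) := hcoc ω z 0 _
    have e3 : B ω 0 ((n : ℤ) • ξ) + B ω ((n : ℤ) • ξ) ((n : ℤ) • ξ + z)
        = B ω 0 ((n : ℤ) • ξ + z) := hcoc ω 0 _ _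
    have hcorr : c + B ω ((n : ℤ) • ξ) ((n : ℤ) • ξ + z) < δ * n := by
      have h' := lt_of_abs_lt (hN₁ n hnN₁)
      rw [← add_div] at h'
      exact (div_lt_iff₀ hnpos).1 h'
    have hβn : (β : ℝ) * n < B (T z ω) 0 ((n : ℤ) • ξ) := hn
    have : (β' : ℝ) * n = (β : ℝ) * n - δ * n := by rw [hδ]; ring
    rw [this]
    rw [e1, ← e2, ← e3] at hβn
    linarith
  have hqinv : ∀ z : ℤ × ℤ, μ ((T z ⁻¹' V) \ V) = 0 := by
    intro z
    refine measure_mono_null ?_ (ae_iff.1 hcor)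
    rintro ω ⟨hω1, hω2⟩
    intro hP
    exact hω2 (claim ω hP z hω1)
  rcases zero_one T hTmeas hTgroup hTzero hErg hVm hqinv with hV0 | hV1
  · -- μ V = 0 : conclude
    have hae : ∀ᵐ ω ∂μ, ω ∉ V := by
      rw [ae_iff]
      simpa [not_not, Set.setOf_mem_eq] using hV0
    filter_upwards [hae] with ω hω
    intro _
    have hα' : ¬ ∀ N : ℕ, ∃ n : ℕ, N ≤ n ∧ (α : ℝ) * n < B ω 0 ((n : ℤ) • ξ) :=
      fun hc => hω ⟨α, hα₀αQ, hc⟩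
    push_neg at hα'
    obtain ⟨N, hN⟩ := hα'
    exact eventually_atTop.2 ⟨N, hN⟩
  · -- μ V = 1 : contradiction with L < α₀
    exfalso
    have hVc : μ Vᶜ = 0 := by
      rw [measure_compl hVm (measure_ne_top μ V), hV1]
      simp
    have hae : ∀ᵐ ω ∂μ, ω ∈ V := by
      rw [ae_iff]
      exact hVc
    have hgar := garsia (μ := μ) (hTmeas ξ)
      ((hmeas 0 ξ).sub measurable_const)
      ((hint 0 ξ).sub (integrable_const ((α₀ : ℝ))))
      ?_
    · have hInt : ∫ ω, (B ω 0 ξ - (α₀ : ℝ)) ∂μ = L - (α₀ : ℝ) := by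
        rw [integral_sub (hint 0 ξ) (integrable_const _), integral_const]
        simp [hL]
      simp only [Pi.sub_apply] at hgar
      rw [hInt] at hgar
      linarith
    · filter_upwards [hae] with ω hω
      obtain ⟨β, hβ, hall⟩ := hω
      obtain ⟨n, hn1, hn⟩ := hall 1
      refine ⟨n, ?_⟩
      have hsum' : ∑ k ∈ Finset.range n, (B ((T ξ)^[k] ω) 0 ξ - (α₀ : ℝ))
          = B ω 0 ((n : ℤ) • ξ) - n * (α₀ : ℝ) := by
        rw [Finset.sum_sub_distrib, Finset.sum_const, Finset.card_range, nsmul_eq_mul]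
        congr 1
        rw [hsum ω n]
        exact Finset.sum_congr rfl fun k _ => by rw [hτiter k ω]
      simp only [Pi.sub_apply]
      rw [hsum']
      have hβα₀ : (α₀ : ℝ) < (β : ℝ) := by exact_mod_cast hβ
      have hn1' : (1 : ℝ) ≤ n := by exact_mod_cast hn1
      nlinarith [hn]

end Aux

/-- Ergodic theorem for stationary `L¹` cocycles along lattice rays:
`B(ω,0,nξ)/n → E[B(0,e₁)] ξ·e₁ + E[B(0,e₂)] ξ·e₂` almost surely. -/
theorem cocycle_ergodic_theorem {Ω : Type*} [MeasurableSpace Ω] (μ : Measure Ω)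
    [IsProbabilityMeasure μ] (T : ℤ × ℤ → Ω → Ω)
    (hTmeas : ∀ z, MeasurePreserving (T z) μ μ)
    (hTgroup : ∀ z w : ℤ × ℤ, ∀ ω : Ω, T z (T w ω) = T (z + w) ω)
    (hTzero : ∀ ω : Ω, T 0 ω = ω)
    (hErg : ∀ s : Set Ω, MeasurableSet s → (∀ z : ℤ × ℤ, T z ⁻¹' s = s) →
      μ s = 0 ∨ μ s = 1)
    (B : Ω → ℤ × ℤ → ℤ × ℤ → ℝ)
    (hmeas : ∀ x y : ℤ × ℤ, Measurable fun ω => B ω x y)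
    (hint : ∀ x y : ℤ × ℤ, Integrable (fun ω => B ω x y) μ)
    (hcoc : ∀ ω : Ω, ∀ x y z : ℤ × ℤ, B ω x y + B ω y z = B ω x z)
    (hstat : ∀ ω : Ω, ∀ x y z : ℤ × ℤ, B (T z ω) x y = B ω (x + z) (y + z)) :
    ∀ ξ : ℤ × ℤ, 0 ≤ ξ.1 → 0 ≤ ξ.2 →
      ∀ᵐ ω ∂μ, Tendsto (fun n : ℕ => B ω 0 ((n : ℤ) • ξ) / n) atTop
        (nhds ((∫ ω', B ω' 0 (1, 0) ∂μ) * (ξ.1 : ℝ) +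
               (∫ ω', B ω' 0 (0, 1) ∂μ) * (ξ.2 : ℝ))) := by
  intro ξ hξ1 hξ2
  have hBxx : ∀ (ω : Ω) (x : ℤ × ℤ), B ω x x = 0 := by
    intro ω x; have := hcoc ω x x x; linarith
  have hBneg : ∀ (ω : Ω) (x : ℤ × ℤ), B ω x 0 = -B ω 0 x := by
    intro ω x
    have := hcoc ω 0 x 0
    have := hBxx ω 0
    linarith
  set L : ℤ × ℤ → ℝ := fun x => ∫ ω', B ω' 0 x ∂μ with hLdef
  have Ladd : ∀ x y : ℤ × ℤ, L (x + y) = L x + L y := by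
    intro x y
    have hpt : (fun ω => B ω 0 (x + y)) = fun ω => B ω 0 x + B (T x ω) 0 y := by
      funext ω
      rw [hstat ω 0 y x, zero_add, add_comm y x]
      exact (hcoc ω 0 x (x + y)).symm
    have : L (x + y) = ∫ ω, (B ω 0 x + B (T x ω) 0 y) ∂μ := by
      rw [hLdef]; exact congrArg (fun g => ∫ ω, g ω ∂μ) hpt
    rw [this, integral_add (hint 0 x) (integrable_comp_mp (hTmeas x) (hint 0 y)),
      integral_comp_mp (hTmeas x) (hmeas 0 y).aestronglyMeasurable]
  have Lzero : L 0 = 0 := by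
    have : (fun ω => B ω 0 0) = fun _ : Ω => (0 : ℝ) := funext fun ω => hBxx ω 0
    rw [hLdef]
    simp only [this, integral_zero]
  have Lsmul : ∀ (k : ℕ) (x : ℤ × ℤ), L ((k : ℤ) • x) = k * L x := by
    intro k x
    induction k with
    | zero => simpa using Lzero
    | succ k ih =>
      have : ((k + 1 : ℕ) : ℤ) • x = (k : ℤ) • x + x := by
        push_cast; rw [add_smul, one_smul]
      rw [this, Ladd, ih]
      push_cast; ring
  have hLξ : L ξ = L (1, 0) * (ξ.1 : ℝ) + L (0, 1) * (ξ.2 : ℝ) := by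
    obtain ⟨a, ha⟩ : ∃ a : ℕ, (a : ℤ) = ξ.1 := ⟨ξ.1.toNat, Int.toNat_of_nonneg hξ1⟩
    obtain ⟨b, hb⟩ : ∃ b : ℕ, (b : ℤ) = ξ.2 := ⟨ξ.2.toNat, Int.toNat_of_nonneg hξ2⟩
    have hξeq : ξ = (a : ℤ) • ((1 : ℤ), (0 : ℤ)) + (b : ℤ) • ((0 : ℤ), (1 : ℤ)) := by
      ext
      · simp [ha]
      · simp [hb]
    conv_lhs => rw [hξeq]
    rw [Ladd, Lsmul, Lsmul, ← ha, ← hb]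
    push_cast
    ring
  have h1 := main_upper (μ := μ) T hTmeas hTgroup hTzero hErg B hmeas hint hcoc hstat ξ
  have h2 := main_upper (μ := μ) T hTmeas hTgroup hTzero hErg (fun ω x y => B ω y x)
    (fun x y => hmeas y x) (fun x y => hint y x)
    (fun ω x y z => by have := hcoc ω z y x; linarith)
    (fun ω x y z => by exact hstat ω y x z) ξ
  have hB'int : (∫ ω', B ω' ξ 0 ∂μ) = -L ξ := by
    have : (fun ω => B ω ξ 0) = fun ω => -B ω 0 ξ := funext fun ω => hBneg ω ξ
    rw [show (∫ ω', B ω' ξ 0 ∂μ) = ∫ ω', -B ω' 0 ξ ∂μ from congrArg (fun g => ∫ ω, g ω ∂μ) this,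
      integral_neg]
  rw [show (∫ ω', (fun ω x y => B ω y x) ω' 0 ξ ∂μ) = -L ξ from hB'int] at h2
  filter_upwards [h1, h2] with ω hω1 hω2
  have hgoal : Tendsto (fun n : ℕ => B ω 0 ((n : ℤ) • ξ) / n) atTop (nhds (L ξ)) := by
    refine tendsto_order.2 ⟨?_, ?_⟩
    · intro a ha
      obtain ⟨α, hα1, hα2⟩ := exists_rat_btwn (show -L ξ < -a by linarith)
      filter_upwards [hω2 α hα1, eventually_ge_atTop 1] with n hn h1n
      have hnpos : (0 : ℝ) < n := by exact_mod_cast h1n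
      have h' : B ω ((n : ℤ) • ξ) 0 ≤ (α : ℝ) * n := hn
      have hB : -(α : ℝ) * n ≤ B ω 0 ((n : ℤ) • ξ) := by
        have h1 := hcoc ω 0 ((n : ℤ) • ξ) 0
        have h0 := hBxx ω 0
        linarith
      rw [lt_div_iff₀ hnpos]
      have hlt : a < -(α : ℝ) := by linarith
      calc a * n < -(α : ℝ) * n := mul_lt_mul_of_pos_right hlt hnpos
        _ ≤ B ω 0 ((n : ℤ) • ξ) := hB
    · intro a ha
      obtain ⟨α, hα1, hα2⟩ := exists_rat_btwn ha
      filter_upwards [hω1 α hα1, eventually_ge_atTop 1] with n hn h1n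
      have hnpos : (0 : ℝ) < n := by exact_mod_cast h1n
      rw [div_lt_iff₀ hnpos]
      calc B ω 0 ((n : ℤ) • ξ) ≤ (α : ℝ) * n := hn
        _ < a * n := mul_lt_mul_of_pos_right hα2 hnpos
  rw [hLξ] at hgoal
  exact hgoal
end

section
/- Let g : ℝ₊² → ℝ be concave, positively 1-homogeneous, and differentiable at ξ ∈ (0,∞)². If ζ ∈ ℝ₊² satisfies g(ζ) = ζ · ∇g(ξ), then g is affine on the segment joining ξ and ζ: g(tξ + (1−t)ζ) = t·g(ξ) + (1−t)·g(ζ) for all t ∈ [0,1]. -/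
/-- If `g` is concave, 1-homogeneous, differentiable at `ξ`, and
`g(ζ) = ζ · ∇g(ξ)`, then `g` is affine on the segment from `ξ` to `ζ`. -/
theorem affine_on_segment (g : ℝ × ℝ → ℝ)
    (hconc : ConcaveOn ℝ {p : ℝ × ℝ | 0 ≤ p.1 ∧ 0 ≤ p.2} g)
    (hhom : ∀ t : ℝ, 0 < t → ∀ p : ℝ × ℝ, 0 ≤ p.1 → 0 ≤ p.2 → g (t • p) = t * g p)
    (ξ : ℝ × ℝ) (hξ1 : 0 < ξ.1) (hξ2 : 0 < ξ.2) (hdiff : DifferentiableAt ℝ g ξ)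
    (ζ : ℝ × ℝ) (hζ1 : 0 ≤ ζ.1) (hζ2 : 0 ≤ ζ.2)
    (hζ : g ζ = fderiv ℝ g ξ ζ) :
    ∀ t : ℝ, 0 ≤ t → t ≤ 1 →
      g (t • ξ + (1 - t) • ζ) = t * g ξ + (1 - t) * g ζ := by
  set L := fderiv ℝ g ξ with hL
  have hξmem : ξ ∈ {p : ℝ × ℝ | 0 ≤ p.1 ∧ 0 ≤ p.2} := ⟨hξ1.le, hξ2.le⟩
  -- Euler relation: g ξ = L ξ
  have euler : g ξ = L ξ := by
    have h1 : HasDerivAt (fun t : ℝ => t • ξ) ξ 1 := by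
      simpa using (hasDerivAt_id (1 : ℝ)).smul_const ξ
    have h2 : HasDerivAt (fun t : ℝ => g (t • ξ)) (L ξ) 1 := by
      have hd : HasFDerivAt g L ((1:ℝ) • ξ) := by rw [one_smul]; exact hdiff.hasFDerivAt
      exact hd.comp_hasDerivAt 1 h1
    have h3 : HasDerivAt (fun t : ℝ => t * g ξ) (g ξ) 1 := by
      simpa using (hasDerivAt_id (1 : ℝ)).mul_const (g ξ)
    have heq : (fun t : ℝ => g (t • ξ)) =ᶠ[nhds (1 : ℝ)] fun t => t * g ξ := by
      filter_upwards [eventually_gt_nhds (show (0:ℝ) < 1 by norm_num)] with t ht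
      exact hhom t ht ξ hξ1.le hξ2.le
    have h4 : HasDerivAt (fun t : ℝ => t * g ξ) (L ξ) 1 := h2.congr_of_eventuallyEq heq.symm
    exact (h4.unique h3).symm
  -- supporting hyperplane: g x ≤ L x for x in the quadrant
  have support : ∀ x : ℝ × ℝ, 0 ≤ x.1 → 0 ≤ x.2 → g x ≤ L x := by
    intro x hx1 hx2
    set v := x - ξ with hv
    have hline : HasDerivAt (fun t : ℝ => ξ + t • v) v 0 := by
      simpa using ((hasDerivAt_id (0 : ℝ)).smul_const v).const_add ξ
    have hcomp : HasDerivAt (fun t : ℝ => g (ξ + t • v)) (L v) 0 := by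
      have hd : HasFDerivAt g L (ξ + (0:ℝ) • v) := by
        rw [zero_smul, add_zero]; exact hdiff.hasFDerivAt
      exact hd.comp_hasDerivAt 0 hline
    -- slope inequality: for t ∈ (0,1], (g(ξ+tv) - g ξ)/t ≥ g x - g ξ
    have key : g x - g ξ ≤ L v := by
      have htend : Filter.Tendsto (fun t : ℝ => (g (ξ + t • v) - g ξ) / t)
          (nhdsWithin 0 (Set.Ioi 0)) (nhds (L v)) := by
        have := hcomp.hasDerivWithinAt (s := Set.Ioi (0:ℝ))
        have h := (hasDerivWithinAt_iff_tendsto_slope.mp this)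
        have hsub : nhdsWithin (0:ℝ) (Set.Ioi 0 \ {0}) = nhdsWithin 0 (Set.Ioi 0) := by
          congr 1
          ext t; simp [Set.mem_diff]
        rw [hsub] at h
        refine h.congr' ?_
        filter_upwards [self_mem_nhdsWithin] with t (ht : 0 < t)
        simp [slope, vsub_eq_sub, div_eq_inv_mul]
      refine ge_of_tendsto htend ?_
      filter_upwards [Ioo_mem_nhdsGT_of_mem (Set.left_mem_Ico.mpr one_pos)] with t ht
      obtain ⟨ht0, ht1⟩ := ht
      have hmem : ξ + t • v ∈ {p : ℝ × ℝ | 0 ≤ p.1 ∧ 0 ≤ p.2} := by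
        have : ξ + t • v = (1 - t) • ξ + t • x := by
          module
        rw [this]
        exact hconc.1 hξmem ⟨hx1, hx2⟩ (by linarith) ht0.le (by ring)
      have hcc : (1 - t) * g ξ + t * g x ≤ g (ξ + t • v) := by
        have : ξ + t • v = (1 - t) • ξ + t • x := by
          module
        rw [this]
        exact hconc.2 hξmem ⟨hx1, hx2⟩ (by linarith) ht0.le (by ring)
      rw [le_div_iff₀ ht0]
      nlinarith
    have : L v = L x - L ξ := by simp [hv]
    rw [this] at key
    linarith [euler ▸ key]
  -- conclude
  intro t ht0 ht1
  have hmem : t • ξ + (1 - t) • ζ ∈ {p : ℝ × ℝ | 0 ≤ p.1 ∧ 0 ≤ p.2} :=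
    hconc.1 hξmem ⟨hζ1, hζ2⟩ ht0 (by linarith) (by ring)
  have hub : g (t • ξ + (1 - t) • ζ) ≤ t * g ξ + (1 - t) * g ζ := by
    have := support _ hmem.1 hmem.2
    have hLval : L (t • ξ + (1 - t) • ζ) = t * L ξ + (1 - t) * L ζ := by
      simp [map_add, map_smul, smul_eq_mul]
    rw [hLval] at this
    rw [euler, hζ]
    exact this
  have hlb : t * g ξ + (1 - t) * g ζ ≤ g (t • ξ + (1 - t) • ζ) :=
    hconc.2 hξmem ⟨hζ1, hζ2⟩ ht0 (by linarith) (by ring)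
  linarith
end
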